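/- arXiv:1101.4210 — 3 statements merged into one kernel-verified Lean document; each statement's English description precedes it below -/
import Mathlib

section
/- Let E be a finite directed graph. Then Aut_{D_E}(C*(E)) is a normal subgroup of Aut(C*(E), D_E), and the quotient group Aut(C*(E), D_E) / Aut_{D_E}(C*(E)) (the Weyl group of C*(E)) is countable. -/
/-- A finite directed graph. -/
structure FinDirGraph where
  V : Type
  E : Type
  [instFV : Fintype V]
  [instFE : Fintype E]
  [instDV : DecidableEq V]
  [instDE : DecidableEq E]
  r : E → V
  s : E → V

attribute [instance] FinDirGraph.instFV FinDirGraph.instFE FinDirGraph.instDV FinDirGraph.instDE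

namespace FinDirGraph

variable (G : FinDirGraph)

/-- `G.IsPathFrom v l` : the list of edges `l` forms a path starting at vertex `v`. -/
def IsPathFrom : G.V → List G.E → Prop
  | _, [] => True
  | v, e :: l => G.s e = v ∧ IsPathFrom (G.r e) l

/-- The terminal vertex of a list of edges starting at `v`. -/
def rangeFrom : G.V → List G.E → G.V
  | v, [] => v
  | _, e :: l => rangeFrom (G.r e) l

/-- A finite path in the graph `G`; vertices are the paths of length `0`. -/
structure Path where
  src : G.V
  edges : List G.E
  ok : G.IsPathFrom src edges

variable {G}

/-- The length of a path. -/
def Path.len (μ : G.Path) : ℕ := μ.edges.length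

/-- The range (terminal vertex) of a path. -/
def Path.rng (μ : G.Path) : G.V := G.rangeFrom μ.src μ.edges

variable (G)

/-- `G` has no sinks: every vertex emits at least one edge. -/
def NoSinks : Prop := ∀ v : G.V, ∃ e : G.E, G.s e = v

/-- `G` has no sources: every vertex receives at least one edge. -/
def NoSources : Prop := ∀ v : G.V, ∃ e : G.E, G.r e = v

/-- Every loop in `G` has an exit. -/
def EveryLoopHasExit : Prop :=
  ∀ μ : G.Path, μ.edges ≠ [] → μ.src = μ.rng →
    ∃ e ∈ μ.edges, ∃ f g : G.E, f ≠ g ∧ G.s f = G.s e ∧ G.s g = G.s e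

variable (A : Type) [CStarAlgebra A] [PartialOrder A] [StarOrderedRing A]

/-- A Cuntz–Krieger `G`-family in a unital C*-algebra `A`. -/
structure CKFamily where
  P : G.V → A
  S : G.E → A
  proj_idem : ∀ v, P v * P v = P v
  proj_sa : ∀ v, star (P v) = P v
  orth : ∀ v w, v ≠ w → P v * P w = 0
  ck1 : ∀ e, star (S e) * S e = P (G.r e)
  ck1' : ∀ e f, e ≠ f → star (S e) * S f = 0
  ck2 : ∀ e, S e * star (S e) ≤ P (G.s e)
  ck3 : ∀ v : G.V, (∃ e, G.s e = v) →
    P v = ∑ e ∈ Finset.univ.filter (fun e => G.s e = v), S e * star (S e)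

variable {G A}

/-- The partial isometry `S_μ` associated to a finite path, defined from the source. -/
def CKFamily.sFrom (F : CKFamily G A) : G.V → List G.E → A
  | v, [] => F.P v
  | _, e :: l => F.S e * F.sFrom (G.r e) l

/-- `S_μ` for a path `μ`. -/
def CKFamily.sPath (F : CKFamily G A) (μ : G.Path) : A := F.sFrom μ.src μ.edges

/-- `P_μ = S_μ S_μ*` for a path `μ`. -/
def CKFamily.pPath (F : CKFamily G A) (μ : G.Path) : A :=
  F.sPath μ * star (F.sPath μ)

variable (G A) in
/-- `A`, together with the Cuntz–Krieger family `F`, is the graph C*-algebra `C*(G)`: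
the family sums to one, generates `A` as a closed *-subalgebra, and is universal. -/
structure IsGraphCStarAlgebra (F : CKFamily G A) : Prop where
  sum_one : ∑ v : G.V, F.P v = 1
  generates :
    (StarAlgebra.adjoin ℂ (Set.range F.P ∪ Set.range F.S)).topologicalClosure = ⊤
  universal : ∀ (C : Type) [CStarAlgebra C] [PartialOrder C] [StarOrderedRing C]
    (F' : CKFamily G C), (∑ v : G.V, F'.P v) = 1 →
      ∃! φ : A →⋆ₐ[ℂ] C, (∀ v, φ (F.P v) = F'.P v) ∧ (∀ e, φ (F.S e) = F'.S e)

/-- The diagonal subalgebra `D_E`: the closed *-subalgebra generated by the `P_μ`. -/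
def CKFamily.DE (F : CKFamily G A) : StarSubalgebra ℂ A :=
  (StarAlgebra.adjoin ℂ {a : A | ∃ μ : G.Path, a = F.pPath μ}).topologicalClosure

/-- `D_E^k`: the linear span of the `P_μ`, `μ ∈ E^k`. -/
noncomputable def CKFamily.DEk (F : CKFamily G A) (k : ℕ) : Submodule ℂ A :=
  Submodule.span ℂ {a : A | ∃ μ : G.Path, μ.len = k ∧ a = F.pPath μ}

/-- The core AF-subalgebra `F_E`: closed linear span of words `S_μ S_ν*` with `|μ| = |ν|`. -/
def CKFamily.FE (F : CKFamily G A) : Set A :=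
  closure ((Submodule.span ℂ
    {a : A | ∃ μ ν : G.Path, μ.len = ν.len ∧ a = F.sPath μ * star (F.sPath ν)}
      : Submodule ℂ A) : Set A)

/-- `F_E^k`: the linear span of words `S_μ S_ν*` with `|μ| = |ν| = k`. -/
noncomputable def CKFamily.FEk (F : CKFamily G A) (k : ℕ) : Submodule ℂ A :=
  Submodule.span ℂ
    {a : A | ∃ μ ν : G.Path, μ.len = k ∧ ν.len = k ∧ a = F.sPath μ * star (F.sPath ν)}

/-- `u ∈ U_E` : `u` is a unitary commuting with all vertex projections. -/
def CKFamily.IsUE (F : CKFamily G A) (u : A) : Prop :=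
  u ∈ unitary A ∧ ∀ v, u * F.P v = F.P v * u

/-- `lam = λ_u` : the endomorphism determined by the unitary `u ∈ U_E`. -/
def CKFamily.IsLambdaU (F : CKFamily G A) (u : A) (lam : A →⋆ₐ[ℂ] A) : Prop :=
  (∀ e, lam (F.S e) = u * F.S e) ∧ (∀ v, lam (F.P v) = F.P v)

/-- The shift `φ(x) = Σ_e S_e x S_e*`. -/
def CKFamily.shift (F : CKFamily G A) (x : A) : A :=
  ∑ e : G.E, F.S e * x * star (F.S e)

/-- `u_k = u φ(u) ⋯ φ^{k-1}(u)` (with `u_0 = 1`). -/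
def CKFamily.ukProd (F : CKFamily G A) (u : A) : ℕ → A
  | 0 => 1
  | m + 1 => F.ukProd u m * F.shift^[m] u

/-- An element is a finite sum of words `S_α S_β*`. -/
def CKFamily.IsSumOfWords (F : CKFamily G A) (a : A) : Prop :=
  ∃ (n : ℕ) (μ ν : Fin n → G.Path),
    a = ∑ i, F.sPath (μ i) * star (F.sPath (ν i))

/-- The group `S_E` of unitaries of the form `Σ S_α S_β*`. -/
def CKFamily.SE (F : CKFamily G A) : Set A :=
  {a : A | a ∈ unitary A ∧ F.IsSumOfWords a}

/-- The group `P_E^k` of unitaries of the form `Σ S_α S_β*`, `|α| = |β| = k`. -/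
def CKFamily.PEk (F : CKFamily G A) (k : ℕ) : Set A :=
  {a : A | a ∈ unitary A ∧ ∃ (n : ℕ) (μ ν : Fin n → G.Path),
    (∀ i, (μ i).len = k ∧ (ν i).len = k) ∧
    a = ∑ i, F.sPath (μ i) * star (F.sPath (ν i))}

/-- `P_E = ∪_k P_E^k`. -/
def CKFamily.PE (F : CKFamily G A) : Set A := ⋃ k : ℕ, F.PEk k

/-- `γ_z` on generators: `γ (S e) = z • S e`, `γ (P v) = P v`. -/
def CKFamily.IsGaugeHom (F : CKFamily G A) (z : ℂ) (ρ : A →⋆ₐ[ℂ] A) : Prop :=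
  (∀ e, ρ (F.S e) = z • F.S e) ∧ (∀ v, ρ (F.P v) = F.P v)

/-- `γ_z` as an automorphism, on generators. -/
def CKFamily.IsGaugeAut (F : CKFamily G A) (z : ℂ) (γ : A ≃⋆ₐ[ℂ] A) : Prop :=
  (∀ e, γ (F.S e) = z • F.S e) ∧ (∀ v, γ (F.P v) = F.P v)

/-- The automorphism `α` of `C*(E)` is induced by an automorphism of the graph `E`. -/
def CKFamily.IsGraphInduced (F : CKFamily G A) (α : A ≃⋆ₐ[ℂ] A) : Prop :=
  ∃ (φV : G.V ≃ G.V) (φE : G.E ≃ G.E),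
    (∀ e, G.s (φE e) = φV (G.s e)) ∧ (∀ e, G.r (φE e) = φV (G.r e)) ∧
    (∀ e, α (F.S e) = F.S (φE e)) ∧ (∀ v, α (F.P v) = F.P (φV v))

/-- Membership in the subgroup `𝔊_E` of `Aut (C*(E))` generated by the graph
automorphisms `Γ_E` together with the automorphisms `λ_u`, `u ∈ S_E ∩ U_E`. -/
inductive CKFamily.InGG (F : CKFamily G A) : (A ≃⋆ₐ[ℂ] A) → Prop
  | gamma (α : A ≃⋆ₐ[ℂ] A) : F.IsGraphInduced α → F.InGG α
  | lam (α : A ≃⋆ₐ[ℂ] A) (u : A) : u ∈ F.SE → F.IsUE u →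
      (∀ e, α (F.S e) = u * F.S e) → (∀ v, α (F.P v) = F.P v) → F.InGG α
  | one : F.InGG (StarAlgEquiv.refl ℂ A)
  | mul (α β : A ≃⋆ₐ[ℂ] A) : F.InGG α → F.InGG β → F.InGG (α.trans β)
  | inv (α : A ≃⋆ₐ[ℂ] A) : F.InGG α → F.InGG α.symm

/-- Membership in the subgroup `𝔊ℜ_E` of `Aut (C*(E))` generated by the graph
automorphisms `Γ_E` together with the automorphisms `λ_u`, `u ∈ P_E ∩ U_E`. -/
inductive CKFamily.InGGR (F : CKFamily G A) : (A ≃⋆ₐ[ℂ] A) → Prop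
  | gamma (α : A ≃⋆ₐ[ℂ] A) : F.IsGraphInduced α → F.InGGR α
  | lam (α : A ≃⋆ₐ[ℂ] A) (u : A) : u ∈ F.PE → F.IsUE u →
      (∀ e, α (F.S e) = u * F.S e) → (∀ v, α (F.P v) = F.P v) → F.InGGR α
  | one : F.InGGR (StarAlgEquiv.refl ℂ A)
  | mul (α β : A ≃⋆ₐ[ℂ] A) : F.InGGR α → F.InGGR β → F.InGGR (α.trans β)
  | inv (α : A ≃⋆ₐ[ℂ] A) : F.InGGR α → F.InGGR α.symm


/-- The map `a^u_{e,f}(x) = S_e* u* x u S_f`. -/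
def CKFamily.amap (F : CKFamily G A) (u : A) (e f : G.E) (x : A) : A :=
  star (F.S e) * (star u * x * u) * F.S f

/-- Composition of the maps `a^u_{e,f}` along a list of pairs of edges. -/
def CKFamily.acomp (F : CKFamily G A) (u : A) : List (G.E × G.E) → A → A
  | [], x => x
  | p :: t, x => F.amap u p.1 p.2 (F.acomp u t x)

/-- The spaces `Ξ_r`: `Ξ_0 = F_E^{k-1}`, `Ξ_r = λ_u(H)* Ξ_{r-1} λ_u(H)`. -/
noncomputable def CKFamily.Xi (F : CKFamily G A) (u : A) (k : ℕ) : ℕ → Submodule ℂ A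
  | 0 => F.FEk (k - 1)
  | r + 1 => Submodule.span ℂ
      {a : A | ∃ x ∈ F.Xi u k r, ∃ e f : G.E, a = star (u * F.S e) * x * (u * F.S f)}

/-- The spaces `Ξ_r^D`: `Ξ_0^D = D_E^{k-1}`, `Ξ_r^D = λ_u(H)* Ξ_{r-1}^D λ_u(H)`. -/
noncomputable def CKFamily.XiD (F : CKFamily G A) (u : A) (k : ℕ) : ℕ → Submodule ℂ A
  | 0 => F.DEk (k - 1)
  | r + 1 => Submodule.span ℂ
      {a : A | ∃ x ∈ F.XiD u k r, ∃ e f : G.E, a = star (u * F.S e) * x * (u * F.S f)}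

end FinDirGraph



namespace FinDirGraph

set_option linter.unusedSectionVars false
set_option linter.unusedVariables false

open scoped Pointwise

variable {G : FinDirGraph} {A : Type} [CStarAlgebra A] [PartialOrder A] [StarOrderedRing A]

namespace CKFamily

variable (F : CKFamily G A)

/-- In a C*-algebra, `x (star x) = 0` implies `x = 0`. -/
lemma aux_eq_zero_of_mul_star_self {x : A} (h : x * star x = 0) : x = 0 := by
  have h1 : ‖x * star x‖ = ‖x‖ * ‖x‖ := CStarRing.norm_self_mul_star
  rw [h, norm_zero] at h1
  have : ‖x‖ = 0 := by nlinarith [norm_nonneg x]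
  simpa using norm_eq_zero.mp this.symm.symm

/-- In a C*-algebra, `(star x) x = 0` implies `x = 0`. -/
lemma aux_eq_zero_of_star_mul_self {x : A} (h : star x * x = 0) : x = 0 := by
  have h1 : ‖star x * x‖ = ‖x‖ * ‖x‖ := CStarRing.norm_star_mul_self
  rw [h, norm_zero] at h1
  have : ‖x‖ = 0 := by nlinarith [norm_nonneg x]
  simpa using norm_eq_zero.mp this.symm.symm

/-- A self-adjoint idempotent has norm at most one. -/
lemma aux_proj_norm_le_one {p : A} (hp : p * p = p) (hps : star p = p) : ‖p‖ ≤ 1 := by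
  have h1 : ‖star p * p‖ = ‖p‖ * ‖p‖ := CStarRing.norm_star_mul_self
  rw [hps, hp] at h1
  nlinarith [norm_nonneg p]

/-- Two commuting self-adjoint idempotents at distance `< 1` are equal. -/
lemma aux_proj_eq {p q : A} (hp : p * p = p) (hq : q * q = q) (hps : star p = p)
    (hqs : star q = q) (hpq : p * q = q * p) (hn : ‖p - q‖ < 1) : p = q := by
  have hqp : q * p = p * q := hpq.symm
  have h2 : (p - q) * (p - q) = p + q - p * q - p * q := by
    rw [mul_sub, sub_mul, sub_mul, hp, hq, hqp]; abel
  have c1 : (p - q) * (p * q) = 0 := by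
    rw [sub_mul, ← mul_assoc p p q, hp, ← mul_assoc q p q, hqp, mul_assoc p q q, hq, sub_self]
  have c2 : (p - q) * (p + q) = p - q := by
    rw [sub_mul, mul_add, mul_add, hp, hq, hqp]; abel
  have h3 : (p - q) * ((p - q) * (p - q)) = p - q := by
    rw [h2]
    have : p + q - p * q - p * q = (p + q) - p * q - p * q := rfl
    rw [this, mul_sub, mul_sub, c1, c2, sub_zero, sub_zero]
  have hle : ‖p - q‖ ≤ ‖p - q‖ * (‖p - q‖ * ‖p - q‖) := by
    calc ‖p - q‖ = ‖(p - q) * ((p - q) * (p - q))‖ := by rw [h3]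
      _ ≤ ‖p - q‖ * ‖(p - q) * (p - q)‖ := norm_mul_le _ _
      _ ≤ ‖p - q‖ * (‖p - q‖ * ‖p - q‖) := by
          exact mul_le_mul_of_nonneg_left (norm_mul_le _ _) (norm_nonneg _)
  have h0 : ‖p - q‖ = 0 := by nlinarith [norm_nonneg (p - q)]
  have := norm_eq_zero.mp h0
  exact sub_eq_zero.mp this

lemma P_mul_S (e : G.E) : F.P (G.s e) * F.S e = F.S e := by
  set P := F.P (G.s e) with hPdef
  have hPs : star P = P := F.proj_sa _
  have hP2 : P * P = P := F.proj_idem _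
  have h1 : F.S e * star (F.S e) ≤ P := F.ck2 e
  have h2 : star (1 - P) * (F.S e * star (F.S e)) * (1 - P) ≤ star (1 - P) * P * (1 - P) :=
    star_left_conjugate_le_conjugate h1 (1 - P)
  have h3 : star (1 - P) * P * (1 - P) = 0 := by
    rw [star_sub, star_one, hPs, sub_mul, one_mul, hP2, sub_self, zero_mul]
  have h4 : ((1 - P) * F.S e) * star ((1 - P) * F.S e)
      = star (1 - P) * (F.S e * star (F.S e)) * (1 - P) := by
    rw [star_mul, star_sub, star_one, hPs]
    simp only [mul_assoc]
  have h5 : ((1 - P) * F.S e) * star ((1 - P) * F.S e) ≤ 0 := by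
    rw [h4]; rw [h3] at h2; exact h2
  have h6 : ((1 - P) * F.S e) * star ((1 - P) * F.S e) = 0 :=
    le_antisymm h5 (mul_star_self_nonneg _)
  have h7 : (1 - P) * F.S e = 0 := aux_eq_zero_of_mul_star_self h6
  rw [sub_mul, one_mul, sub_eq_zero] at h7
  exact h7.symm

lemma S_mul_P (e : G.E) : F.S e * F.P (G.r e) = F.S e := by
  set P := F.P (G.r e) with hPdef
  have hPs : star P = P := F.proj_sa _
  have hP2 : P * P = P := F.proj_idem _
  have hck : star (F.S e) * F.S e = P := F.ck1 e
  have h1 : star (F.S e * (P - 1)) * (F.S e * (P - 1)) = 0 := by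
    rw [star_mul, star_sub, star_one, hPs]
    calc (P - 1) * star (F.S e) * (F.S e * (P - 1))
        = (P - 1) * ((star (F.S e) * F.S e) * (P - 1)) := by simp only [mul_assoc]
      _ = 0 := by rw [hck, mul_sub, mul_one, hP2, sub_self, mul_zero]
  have h2 := aux_eq_zero_of_star_mul_self h1
  rw [mul_sub, mul_one, sub_eq_zero] at h2
  exact h2

lemma norm_S_le_one (e : G.E) : ‖F.S e‖ ≤ 1 := by
  have h1 : ‖star (F.S e) * F.S e‖ = ‖F.S e‖ * ‖F.S e‖ := CStarRing.norm_star_mul_self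
  rw [F.ck1 e] at h1
  have h2 : ‖F.P (G.r e)‖ ≤ 1 := aux_proj_norm_le_one (F.proj_idem _) (F.proj_sa _)
  nlinarith [norm_nonneg (F.S e)]

lemma P_mul_sFrom : ∀ (l : List G.E) (v : G.V), G.IsPathFrom v l →
    F.P v * F.sFrom v l = F.sFrom v l
  | [], v, _ => by simp only [sFrom]; exact F.proj_idem v
  | e :: l, v, hp => by
    obtain ⟨hse, _⟩ := hp
    simp only [sFrom]
    rw [← mul_assoc, ← hse, P_mul_S]

lemma sFrom_mul_P : ∀ (l : List G.E) (v : G.V), G.IsPathFrom v l →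
    F.sFrom v l * F.P (G.rangeFrom v l) = F.sFrom v l
  | [], v, _ => by simp only [sFrom, rangeFrom]; exact F.proj_idem v
  | e :: l, v, hp => by
    simp only [sFrom, rangeFrom]
    rw [mul_assoc, sFrom_mul_P l (G.r e) hp.2]

lemma star_sFrom_mul_self : ∀ (l : List G.E) (v : G.V), G.IsPathFrom v l →
    star (F.sFrom v l) * F.sFrom v l = F.P (G.rangeFrom v l)
  | [], v, _ => by
    simp only [sFrom, rangeFrom]
    rw [F.proj_sa]; exact F.proj_idem v
  | e :: l, v, hp => by
    simp only [sFrom, rangeFrom]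
    rw [star_mul, mul_assoc, ← mul_assoc (star (F.S e)), F.ck1,
      P_mul_sFrom F l (G.r e) hp.2]
    exact star_sFrom_mul_self l (G.r e) hp.2

lemma star_P_mul_sFrom (l : List G.E) (v : G.V) (hl : G.IsPathFrom v l) :
    star (F.sFrom v l) * F.P v = star (F.sFrom v l) := by
  rw [← F.proj_sa, ← star_mul, P_mul_sFrom F l v hl]

lemma sFrom_append : ∀ (l k : List G.E) (v : G.V), G.IsPathFrom v l →
    G.IsPathFrom (G.rangeFrom v l) k →
    F.sFrom v (l ++ k) = F.sFrom v l * F.sFrom (G.rangeFrom v l) k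
  | [], k, v, _, hk => by
    simp only [List.nil_append, sFrom, rangeFrom]
    exact (P_mul_sFrom F k v hk).symm
  | e :: l, k, v, hp, hk => by
    simp only [List.cons_append, List.append_eq, sFrom, rangeFrom] at *
    rw [sFrom_append l k (G.r e) hp.2 hk, mul_assoc]

lemma isPathFrom_append : ∀ (l k : List G.E) (v : G.V), G.IsPathFrom v (l ++ k) →
    G.IsPathFrom v l ∧ G.IsPathFrom (G.rangeFrom v l) k
  | [], k, v, h => ⟨trivial, h⟩
  | e :: l, k, v, h => by
    obtain ⟨hse, ht⟩ := h
    obtain ⟨h1, h2⟩ := isPathFrom_append l k (G.r e) ht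
    exact ⟨⟨hse, h1⟩, h2⟩

/-- The key word computation: `S_μ* S_ν` is `S_κ`, `S_κ*` or `0`. -/
lemma star_sFrom_mul_sFrom : ∀ (l m : List G.E) (v : G.V),
    G.IsPathFrom v l → G.IsPathFrom v m →
    (∃ k, m = l ++ k ∧ G.IsPathFrom (G.rangeFrom v l) k ∧
      star (F.sFrom v l) * F.sFrom v m = F.sFrom (G.rangeFrom v l) k) ∨
    (∃ k, l = m ++ k ∧ G.IsPathFrom (G.rangeFrom v m) k ∧
      star (F.sFrom v l) * F.sFrom v m = star (F.sFrom (G.rangeFrom v m) k)) ∨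
    star (F.sFrom v l) * F.sFrom v m = 0
  | [], m, v, _, hm => by
    refine Or.inl ⟨m, (List.nil_append m).symm, hm, ?_⟩
    show star (F.P v) * F.sFrom v m = F.sFrom v m
    rw [F.proj_sa, P_mul_sFrom F m v hm]
  | e :: l, [], v, hp, _ => by
    refine Or.inr (Or.inl ⟨e :: l, (List.nil_append _).symm, hp, ?_⟩)
    show star (F.sFrom v (e :: l)) * F.P v = _
    exact star_P_mul_sFrom F (e :: l) v hp
  | e :: l, f :: m, v, hp, hm => by
    obtain ⟨hse, hpl⟩ := hp
    obtain ⟨hsf, hpm⟩ := hm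
    have key : star (F.sFrom v (e :: l)) * F.sFrom v (f :: m)
        = star (F.sFrom (G.r e) l) * ((star (F.S e) * F.S f) * F.sFrom (G.r f) m) := by
      show star (F.S e * F.sFrom (G.r e) l) * (F.S f * F.sFrom (G.r f) m) = _
      rw [star_mul]
      simp only [mul_assoc]
    by_cases hef : e = f
    · subst hef
      rw [F.ck1, P_mul_sFrom F m (G.r e) hpm] at key
      rcases star_sFrom_mul_sFrom l m (G.r e) hpl hpm with
        ⟨k, hk, hpk, heq⟩ | ⟨k, hk, hpk, heq⟩ | heq
      · exact Or.inl ⟨k, by rw [hk, List.cons_append], hpk, by rw [key]; exact heq⟩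
      · exact Or.inr (Or.inl ⟨k, by rw [hk, List.cons_append], hpk, by rw [key]; exact heq⟩)
      · exact Or.inr (Or.inr (by rw [key]; exact heq))
    · refine Or.inr (Or.inr ?_)
      rw [key, F.ck1' e f hef, zero_mul, mul_zero]

lemma star_sFrom_mul_sFrom_ne (l m : List G.E) (v w : G.V) (hvw : v ≠ w)
    (hl : G.IsPathFrom v l) (hm : G.IsPathFrom w m) :
    star (F.sFrom v l) * F.sFrom w m = 0 := by
  calc star (F.sFrom v l) * F.sFrom w m
      = (star (F.sFrom v l) * F.P v) * (F.P w * F.sFrom w m) := by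
        rw [star_P_mul_sFrom F l v hl, P_mul_sFrom F m w hm]
    _ = star (F.sFrom v l) * ((F.P v * F.P w) * F.sFrom w m) := by simp only [mul_assoc]
    _ = 0 := by rw [F.orth v w hvw, zero_mul, mul_zero]

/-- Products of diagonal projections: list-level trichotomy. -/
lemma pP_mul_pP (l m : List G.E) (v : G.V) (hl : G.IsPathFrom v l) (hm : G.IsPathFrom v m) :
    (F.sFrom v l * star (F.sFrom v l)) * (F.sFrom v m * star (F.sFrom v m)) = 0 ∨
    (F.sFrom v l * star (F.sFrom v l)) * (F.sFrom v m * star (F.sFrom v m))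
      = F.sFrom v l * star (F.sFrom v l) ∨
    (F.sFrom v l * star (F.sFrom v l)) * (F.sFrom v m * star (F.sFrom v m))
      = F.sFrom v m * star (F.sFrom v m) := by
  have hassoc : (F.sFrom v l * star (F.sFrom v l)) * (F.sFrom v m * star (F.sFrom v m))
      = F.sFrom v l * ((star (F.sFrom v l) * F.sFrom v m) * star (F.sFrom v m)) := by
    simp only [mul_assoc]
  rcases star_sFrom_mul_sFrom F l m v hl hm with
    ⟨k, hk, hpk, heq⟩ | ⟨k, hk, hpk, heq⟩ | heq
  · -- m = l ++ k ; product is P_m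
    right; right
    have happ : F.sFrom v m = F.sFrom v l * F.sFrom (G.rangeFrom v l) k := by
      rw [hk]; exact sFrom_append F l k v hl hpk
    rw [hassoc, heq, ← mul_assoc, ← happ]
  · -- l = m ++ k ; product is P_l
    right; left
    have happ : F.sFrom v l = F.sFrom v m * F.sFrom (G.rangeFrom v m) k := by
      rw [hk]; exact sFrom_append F m k v hm hpk
    rw [hassoc, heq, ← star_mul, ← happ]
  · left
    rw [hassoc, heq, zero_mul, mul_zero]

lemma pP_star (l : List G.E) (v : G.V) :
    star (F.sFrom v l * star (F.sFrom v l)) = F.sFrom v l * star (F.sFrom v l) := by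
  rw [star_mul, star_star]

lemma pP_idem (l : List G.E) (v : G.V) (hl : G.IsPathFrom v l) :
    (F.sFrom v l * star (F.sFrom v l)) * (F.sFrom v l * star (F.sFrom v l))
      = F.sFrom v l * star (F.sFrom v l) := by
  have h1 := star_sFrom_mul_self F l v hl
  have h3 : F.P (G.rangeFrom v l) * star (F.sFrom v l) = star (F.sFrom v l) := by
    rw [← F.proj_sa, ← star_mul, sFrom_mul_P F l v hl]
  calc (F.sFrom v l * star (F.sFrom v l)) * (F.sFrom v l * star (F.sFrom v l))
      = F.sFrom v l * ((star (F.sFrom v l) * F.sFrom v l) * star (F.sFrom v l)) := by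
        simp only [mul_assoc]
    _ = F.sFrom v l * star (F.sFrom v l) := by rw [h1, h3]

lemma pP_norm_le_one (l : List G.E) (v : G.V) (hl : G.IsPathFrom v l) :
    ‖F.sFrom v l * star (F.sFrom v l)‖ ≤ 1 :=
  aux_proj_norm_le_one (pP_idem F l v hl) (pP_star F l v)

lemma pPath_eq_pP (μ : G.Path) :
    F.pPath μ = F.sFrom μ.src μ.edges * star (F.sFrom μ.src μ.edges) := rfl

lemma pPath_nil (v : G.V) : F.pPath ⟨v, [], trivial⟩ = F.P v := by
  show F.sFrom v [] * star (F.sFrom v []) = F.P v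
  show F.P v * star (F.P v) = F.P v
  rw [F.proj_sa]; exact F.proj_idem v

/-- Trichotomy for products of diagonal projections indexed by paths. -/
lemma pPath_mul_pPath (μ ν : G.Path) :
    F.pPath μ * F.pPath ν = 0 ∨ F.pPath μ * F.pPath ν = F.pPath μ ∨
      F.pPath μ * F.pPath ν = F.pPath ν := by
  obtain ⟨v, l, hl⟩ := μ
  obtain ⟨w, m, hm⟩ := ν
  by_cases hvw : v = w
  · subst hvw
    rcases pP_mul_pP F l m v hl hm with h | h | h
    · exact Or.inl h
    · exact Or.inr (Or.inl h)
    · exact Or.inr (Or.inr h)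
  · left
    show (F.sFrom v l * star (F.sFrom v l)) * (F.sFrom w m * star (F.sFrom w m)) = 0
    have h0 := star_sFrom_mul_sFrom_ne F l m v w hvw hl hm
    calc (F.sFrom v l * star (F.sFrom v l)) * (F.sFrom w m * star (F.sFrom w m))
        = F.sFrom v l * ((star (F.sFrom v l) * F.sFrom w m) * star (F.sFrom w m)) := by
          simp only [mul_assoc]
      _ = 0 := by rw [h0, zero_mul, mul_zero]

lemma pPath_star (μ : G.Path) : star (F.pPath μ) = F.pPath μ := pP_star F μ.edges μ.src

lemma pPath_commute (μ ν : G.Path) : F.pPath μ * F.pPath ν = F.pPath ν * F.pPath μ := by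
  have hsa : star (F.pPath μ * F.pPath ν) = F.pPath μ * F.pPath ν := by
    rcases pPath_mul_pPath F μ ν with h | h | h <;> rw [h]
    · exact star_zero A
    · exact pPath_star F μ
    · exact pPath_star F ν
  rw [star_mul, pPath_star, pPath_star] at hsa
  exact hsa.symm

/-- The generating set of the diagonal. -/
lemma mem_DE_pPath (μ : G.Path) : F.pPath μ ∈ F.DE :=
  (StarSubalgebra.le_topologicalClosure _)
    (StarAlgebra.subset_adjoin ℂ _ ⟨μ, rfl⟩)

lemma mem_DE_P (v : G.V) : F.P v ∈ F.DE := by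
  rw [← pPath_nil F v]; exact mem_DE_pPath F _

lemma DE_coe : (F.DE : Set A)
    = closure (↑(StarAlgebra.adjoin ℂ {a : A | ∃ μ : G.Path, a = F.pPath μ}) : Set A) :=
  StarSubalgebra.topologicalClosure_coe _

/-- The diagonal is commutative. -/
lemma DE_comm : ∀ x ∈ F.DE, ∀ y ∈ F.DE, x * y = y * x := by
  set s : Set A := {a : A | ∃ μ : G.Path, a = F.pPath μ} with hs
  -- step 1 : generators commute with everything in the adjoin
  have hgen : ∀ a ∈ s, ∀ y ∈ StarAlgebra.adjoin ℂ s, a * y = y * a := by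
    rintro a ha y hy
    obtain ⟨μ, rfl⟩ := ha
    induction hy using StarAlgebra.adjoin_induction with
    | mem x hx =>
      obtain ⟨ν, rfl⟩ := hx
      exact pPath_commute F μ ν
    | algebraMap r => exact (Algebra.commutes r _).symm
    | add x y _ _ hx hy => rw [mul_add, add_mul, hx, hy]
    | mul x y _ _ hx hy => rw [← mul_assoc, hx, mul_assoc, hy, ← mul_assoc]
    | star x _ hx =>
      have := congrArg star hx
      rw [star_mul, star_mul, pPath_star] at this
      exact this.symm
  -- step 2 : the adjoin is commutative
  have hadj : ∀ x ∈ StarAlgebra.adjoin ℂ s, ∀ y ∈ StarAlgebra.adjoin ℂ s, x * y = y * x := by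
    intro x hx
    induction hx using StarAlgebra.adjoin_induction with
    | mem x hx => exact hgen x hx
    | algebraMap r => exact fun y _ => Algebra.commutes r y
    | add x y _ _ hx hy => intro z hz; rw [add_mul, mul_add, hx z hz, hy z hz]
    | mul x y _ _ hx hy => intro z hz; rw [mul_assoc, hy z hz, ← mul_assoc, hx z hz, mul_assoc]
    | star x hx ih =>
      intro y hy
      have h1 := ih (star y) (star_mem hy)
      have := congrArg star h1
      rw [star_mul, star_mul, star_star] at this
      exact this.symm
  -- step 3 : pass to the closure, twice
  have hclos1 : ∀ y ∈ StarAlgebra.adjoin ℂ s, ∀ x ∈ F.DE, x * y = y * x := by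
    intro y hy x hx
    have hsub : (F.DE : Set A) ⊆ {x : A | x * y = y * x} := by
      rw [DE_coe]
      refine closure_minimal (fun z hz => hadj z hz y hy) ?_
      exact isClosed_eq (continuous_id.mul continuous_const) (continuous_const.mul continuous_id)
    exact hsub hx
  intro x hx y hy
  have hsub : (F.DE : Set A) ⊆ {y : A | x * y = y * x} := by
    rw [DE_coe]
    refine closure_minimal (fun z hz => hclos1 z hz x hx) ?_
    exact isClosed_eq (continuous_const.mul continuous_id) (continuous_id.mul continuous_const)
  exact hsub hy

/-- The key rigidity lemma: two diagonal-preserving automorphisms that are close on the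
generators agree on the diagonal. -/
lemma rigid (α β : A ≃⋆ₐ[ℂ] A)
    (hα : ⇑α '' (F.DE : Set A) = (F.DE : Set A))
    (hβ : ⇑β '' (F.DE : Set A) = (F.DE : Set A))
    (hS : ∀ e, ‖α (F.S e) - β (F.S e)‖ < 1/2)
    (hP : ∀ v, ‖α (F.P v) - β (F.P v)‖ < 1/2) :
    ∀ x ∈ F.DE, α x = β x := by
  set γ : A ≃⋆ₐ[ℂ] A := α.trans β.symm with hγdef
  have hγapp : ∀ x : A, γ x = β.symm (α x) := fun x => StarAlgEquiv.trans_apply _ _ _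
  have hβsymm : ∀ x ∈ (F.DE : Set A), β.symm x ∈ (F.DE : Set A) := by
    intro x hx
    rw [← hβ] at hx
    obtain ⟨y, hy, rfl⟩ := hx
    rw [StarAlgEquiv.symm_apply_apply]; exact hy
  have hγDE : ∀ x ∈ (F.DE : Set A), γ x ∈ (F.DE : Set A) := by
    intro x hx
    rw [hγapp]
    exact hβsymm _ (by rw [← hα]; exact ⟨x, hx, rfl⟩)
  have hkey : ∀ x : A, ‖γ x - x‖ = ‖α x - β x‖ := by
    intro x
    have h1 : γ x - x = β.symm (α x - β x) := by
      rw [map_sub, StarAlgEquiv.symm_apply_apply, hγapp]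
    rw [h1, StarAlgEquiv.norm_map]
  have hγnorm : ∀ x : A, ‖γ x‖ = ‖x‖ := fun x => StarAlgEquiv.norm_map γ x
  -- γ fixes every diagonal projection, by induction on the length of the path
  have hproj : ∀ (l : List G.E) (v : G.V), G.IsPathFrom v l →
      γ (F.sFrom v l * star (F.sFrom v l)) = F.sFrom v l * star (F.sFrom v l) := by
    intro l
    induction l with
    | nil =>
      intro v _
      have hb : F.sFrom v [] * star (F.sFrom v []) = F.P v := by
        show F.P v * star (F.P v) = F.P v
        rw [F.proj_sa]; exact F.proj_idem v
      rw [hb]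
      refine aux_proj_eq ?_ (F.proj_idem v) ?_ (F.proj_sa v) ?_ ?_
      · rw [← map_mul, F.proj_idem]
      · rw [← map_star, F.proj_sa]
      · exact DE_comm F _ (hγDE _ (mem_DE_P F v)) _ (mem_DE_P F v)
      · rw [hkey]
        calc ‖α (F.P v) - β (F.P v)‖ < 1/2 := hP v
          _ < 1 := by norm_num
    | cons e t ih =>
      intro v hp
      obtain ⟨hse, hpt⟩ := hp
      have hXproj := ih (G.r e) hpt
      set X := F.sFrom (G.r e) t with hXdef
      set M := X * star X with hMdef
      have hexp : F.sFrom v (e :: t) * star (F.sFrom v (e :: t)) = F.S e * M * star (F.S e) := by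
        show (F.S e * X) * star (F.S e * X) = _
        rw [star_mul, hMdef]
        simp only [mul_assoc]
      have hpr_idem := pP_idem F (e :: t) v ⟨hse, hpt⟩
      have hpr_star := pP_star F (e :: t) v
      have hpr_mem : F.sFrom v (e :: t) * star (F.sFrom v (e :: t)) ∈ F.DE :=
        mem_DE_pPath F ⟨v, e :: t, ⟨hse, hpt⟩⟩
      refine aux_proj_eq ?_ hpr_idem ?_ hpr_star ?_ ?_
      · rw [← map_mul, hpr_idem]
      · rw [← map_star, hpr_star]
      · exact DE_comm F _ (hγDE _ hpr_mem) _ hpr_mem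
      · -- norm estimate
        have hγexp : γ (F.sFrom v (e :: t) * star (F.sFrom v (e :: t)))
            = γ (F.S e) * M * star (γ (F.S e)) := by
          rw [hexp, map_mul, map_mul, map_star, hXproj]
        set a := γ (F.S e) with ha
        set b := F.S e with hb
        have hab : ‖a - b‖ < 1/2 := by
          rw [ha, hkey]; exact hS e
        have hMn : ‖M‖ ≤ 1 := pP_norm_le_one F t (G.r e) hpt
        have han : ‖a‖ ≤ 1 := by rw [ha, hγnorm]; exact norm_S_le_one F e
        have hbn : ‖b‖ ≤ 1 := norm_S_le_one F e
        have split : a * M * star a - b * M * star b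
            = (a - b) * M * star a + b * M * (star a - star b) := by noncomm_ring
        have e1 : ‖(a - b) * M * star a‖ ≤ ‖a - b‖ * ‖M‖ * ‖a‖ := by
          calc ‖(a - b) * M * star a‖ ≤ ‖(a - b) * M‖ * ‖star a‖ := norm_mul_le _ _
            _ ≤ ‖a - b‖ * ‖M‖ * ‖star a‖ :=
                mul_le_mul_of_nonneg_right (norm_mul_le _ _) (norm_nonneg _)
            _ = ‖a - b‖ * ‖M‖ * ‖a‖ := by rw [norm_star]
        have e2 : ‖b * M * (star a - star b)‖ ≤ ‖b‖ * ‖M‖ * ‖a - b‖ := by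
          calc ‖b * M * (star a - star b)‖ ≤ ‖b * M‖ * ‖star a - star b‖ := norm_mul_le _ _
            _ ≤ ‖b‖ * ‖M‖ * ‖star a - star b‖ :=
                mul_le_mul_of_nonneg_right (norm_mul_le _ _) (norm_nonneg _)
            _ = ‖b‖ * ‖M‖ * ‖a - b‖ := by rw [← star_sub, norm_star]
        have e3 := norm_add_le ((a - b) * M * star a) (b * M * (star a - star b))
        rw [hγexp, hexp, split]
        have p1 : ‖a - b‖ * ‖M‖ * ‖a‖ ≤ ‖a - b‖ := by
          calc ‖a - b‖ * ‖M‖ * ‖a‖ ≤ ‖a - b‖ * 1 * 1 := by gcongr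
            _ = ‖a - b‖ := by ring
        have p2 : ‖b‖ * ‖M‖ * ‖a - b‖ ≤ ‖a - b‖ := by
          calc ‖b‖ * ‖M‖ * ‖a - b‖ ≤ 1 * 1 * ‖a - b‖ := by gcongr
            _ = ‖a - b‖ := by ring
        calc ‖(a - b) * M * star a + b * M * (star a - star b)‖
            ≤ ‖(a - b) * M * star a‖ + ‖b * M * (star a - star b)‖ := e3
          _ ≤ ‖a - b‖ + ‖a - b‖ := by linarith
          _ < 1 := by linarith
  -- γ fixes the adjoin generated by the diagonal projections
  have hgenfix : ∀ a ∈ ({a : A | ∃ μ : G.Path, a = F.pPath μ} : Set A), γ a = a := by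
    rintro a ⟨μ, rfl⟩
    exact hproj μ.edges μ.src μ.ok
  have hadjfix : ∀ a ∈ StarAlgebra.adjoin ℂ {a : A | ∃ μ : G.Path, a = F.pPath μ}, γ a = a := by
    intro a ha
    induction ha using StarAlgebra.adjoin_induction with
    | mem x hx => exact hgenfix x hx
    | algebraMap r =>
      rw [Algebra.algebraMap_eq_smul_one, map_smul, map_one]
    | add x y _ _ hx hy => rw [map_add, hx, hy]
    | mul x y _ _ hx hy => rw [map_mul, hx, hy]
    | star x _ hx => rw [map_star, hx]
  have hfix : ∀ x ∈ F.DE, γ x = x := by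
    intro x hx
    have hsub : (F.DE : Set A) ⊆ {x : A | γ x = x} := by
      rw [DE_coe]
      exact closure_minimal hadjfix
        (isClosed_eq (StarAlgEquiv.isometry γ).continuous continuous_id)
    exact hsub hx
  intro x hx
  have h := hfix x hx
  rw [hγapp] at h
  have := congrArg β h
  rwa [StarAlgEquiv.apply_symm_apply] at this

/-- Lists with entries in a countable set form a countable set. -/
lemma aux_countable_lists {α : Type} {s : Set α} (hs : s.Countable) :
    {l : List α | ∀ x ∈ l, x ∈ s}.Countable := by
  haveI := hs.to_subtype
  have hsub : {l : List α | ∀ x ∈ l, x ∈ s}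
      ⊆ Set.range (fun l : List s => l.map Subtype.val) := by
    intro l hl
    induction l with
    | nil => exact ⟨[], rfl⟩
    | cons a t iht =>
      obtain ⟨t', ht'⟩ := iht (fun x hx => hl x (List.mem_cons_of_mem _ hx))
      exact ⟨⟨a, hl a List.mem_cons_self⟩ :: t', by simp [ht']⟩
  exact (Set.countable_range _).mono hsub

open scoped Pointwise in
/-- The C*-algebra generated by the Cuntz–Krieger family is separable. -/
lemma aux_separable
    (hgen : (StarAlgebra.adjoin ℂ (Set.range F.P ∪ Set.range F.S)).topologicalClosure
      = (⊤ : StarSubalgebra ℂ A)) :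
    ∃ Q : Set A, Q.Countable ∧ Dense Q := by
  set s : Set A := Set.range F.P ∪ Set.range F.S with hsdef
  have hs : s.Countable := (Set.countable_range _).union (Set.countable_range _)
  have hss : (s ∪ star s).Countable := by
    refine hs.union ?_
    rw [← Set.star_preimage]
    exact hs.preimage star_injective
  have hM : (↑(Submonoid.closure (s ∪ star s)) : Set A).Countable := by
    rw [Submonoid.closure_eq_image_prod]
    exact (aux_countable_lists hss).image List.prod
  have hspan : TopologicalSpace.IsSeparable
      (↑(Submodule.span ℂ (↑(Submonoid.closure (s ∪ star s)) : Set A)) : Set A) :=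
    hM.isSeparable.span
  have hadjsub : (↑(StarAlgebra.adjoin ℂ s) : Set A)
      ⊆ ↑(Submodule.span ℂ (↑(Submonoid.closure (s ∪ star s)) : Set A)) := by
    intro x hx
    have h := StarAlgebra.adjoin_eq_span (R := ℂ) s
    have : x ∈ Subalgebra.toSubmodule (StarAlgebra.adjoin ℂ s).toSubalgebra := hx
    rw [h] at this
    exact this
  have huniv : (Set.univ : Set A) = closure (↑(StarAlgebra.adjoin ℂ s) : Set A) := by
    have h1 := congrArg (fun (S : StarSubalgebra ℂ A) => (S : Set A)) hgen
    rw [StarSubalgebra.topologicalClosure_coe, StarSubalgebra.coe_top] at h1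
    exact h1.symm
  have hsep : TopologicalSpace.IsSeparable (Set.univ : Set A) := by
    refine (hspan.closure).mono ?_
    rw [huniv]
    exact closure_mono hadjsub
  haveI : TopologicalSpace.SeparableSpace A := TopologicalSpace.isSeparable_univ_iff.mp hsep
  exact TopologicalSpace.exists_countable_dense A

end CKFamily

end FinDirGraph

open FinDirGraph in
/-- Proposition 3.5 (countableweyl). -/
theorem stmt_3 (G : FinDirGraph)
    (A : Type) [CStarAlgebra A] [PartialOrder A] [StarOrderedRing A]
    (F : CKFamily G A) (hGA : IsGraphCStarAlgebra G A F) :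
    -- Aut_{D_E}(C*(E)) is contained in Aut(C*(E), D_E)
    (∀ β : A ≃⋆ₐ[ℂ] A, (∀ x ∈ F.DE, β x = x) → ⇑β '' (F.DE : Set A) = (F.DE : Set A)) ∧
    -- Aut_{D_E}(C*(E)) is normal in Aut(C*(E), D_E)
    (∀ α β : A ≃⋆ₐ[ℂ] A, ⇑α '' (F.DE : Set A) = (F.DE : Set A) →
      (∀ x ∈ F.DE, β x = x) → ∀ x ∈ F.DE, α (β (α.symm x)) = x) ∧
    -- the quotient Aut(C*(E), D_E)/Aut_{D_E}(C*(E)) is countable: there is a countable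
    -- family of coset representatives (α, β lie in the same coset iff they agree on D_E)
    (∃ R : Set (A ≃⋆ₐ[ℂ] A), R.Countable ∧
      ∀ α : A ≃⋆ₐ[ℂ] A, ⇑α '' (F.DE : Set A) = (F.DE : Set A) →
        ∃ β ∈ R, ⇑β '' (F.DE : Set A) = (F.DE : Set A) ∧ ∀ x ∈ F.DE, α x = β x) := by
  classical
  refine ⟨?_, ?_, ?_⟩
  · -- Aut_{D_E} ⊆ Aut(·, D_E)
    intro β hfix
    ext y
    constructor
    · rintro ⟨x, hx, rfl⟩
      rwa [hfix x hx]
    · intro hy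
      exact ⟨y, hy, hfix y hy⟩
  · -- normality
    intro α β hα hfix x hx
    have hx' : x ∈ ⇑α '' (F.DE : Set A) := by rw [hα]; exact hx
    obtain ⟨y, hy, rfl⟩ := hx'
    rw [StarAlgEquiv.symm_apply_apply, hfix y hy]
  · -- countability of the Weyl group
    obtain ⟨Q, hQc, hQd⟩ := CKFamily.aux_separable F hGA.generates
    haveI : Countable ↥Q := hQc.to_subtype
    let J : Type := (G.E → ↥Q) × (G.V → ↥Q)
    haveI : Countable J := inferInstance
    let cond : J → (A ≃⋆ₐ[ℂ] A) → Prop := fun j β =>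
      ⇑β '' (F.DE : Set A) = (F.DE : Set A) ∧
      (∀ e, ‖β (F.S e) - ((j.1 e : A))‖ < 1/4) ∧
      (∀ v, ‖β (F.P v) - ((j.2 v : A))‖ < 1/4)
    refine ⟨⋃ j : J, (if h : ∃ β, cond j β then {h.choose} else ∅), ?_, ?_⟩
    · refine Set.countable_iUnion (fun j => ?_)
      split_ifs
      · exact Set.countable_singleton _
      · exact Set.countable_empty
    · intro α hα
      have hc1 : ∀ e : G.E, ∃ q : ↥Q, ‖α (F.S e) - (q : A)‖ < 1/4 := by
        intro e
        obtain ⟨y, hyQ, hy⟩ := hQd.exists_dist_lt (α (F.S e)) (by norm_num : (0:ℝ) < 1/4)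
        exact ⟨⟨y, hyQ⟩, by rwa [← dist_eq_norm]⟩
      have hc2 : ∀ v : G.V, ∃ q : ↥Q, ‖α (F.P v) - (q : A)‖ < 1/4 := by
        intro v
        obtain ⟨y, hyQ, hy⟩ := hQd.exists_dist_lt (α (F.P v)) (by norm_num : (0:ℝ) < 1/4)
        exact ⟨⟨y, hyQ⟩, by rwa [← dist_eq_norm]⟩
      choose f hf using hc1
      choose g hg using hc2
      have hex : ∃ β, cond (⟨f, g⟩ : J) β := ⟨α, hα, hf, hg⟩
      have hβ : cond (⟨f, g⟩ : J) hex.choose := hex.choose_spec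
      refine ⟨hex.choose, ?_, hβ.1, ?_⟩
      · refine Set.mem_iUnion.mpr ⟨⟨f, g⟩, ?_⟩
        rw [dif_pos hex]
        exact Set.mem_singleton _
      · refine CKFamily.rigid F α hex.choose hα hβ.1 ?_ ?_
        · intro e
          have h1 := hf e
          have h2 := hβ.2.1 e
          have h3 := dist_triangle (α (F.S e)) ((f e : A)) (hex.choose (F.S e))
          rw [dist_eq_norm, dist_eq_norm, dist_eq_norm] at h3
          have h4 : ‖(f e : A) - hex.choose (F.S e)‖ = ‖hex.choose (F.S e) - (f e : A)‖ :=
            norm_sub_rev _ _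
          linarith
        · intro v
          have h1 := hg v
          have h2 := hβ.2.2 v
          have h3 := dist_triangle (α (F.P v)) ((g v : A)) (hex.choose (F.P v))
          rw [dist_eq_norm, dist_eq_norm, dist_eq_norm] at h3
          have h4 : ‖(g v : A) - hex.choose (F.P v)‖ = ‖hex.choose (F.P v) - (g v : A)‖ :=
            norm_sub_rev _ _
          linarith
end

section
/- Let E be a finite directed graph without sinks and let u ∈ U_E. Then: (1) if u F_E u* ⊆ F_E, then λ_u(F_E) ⊆ F_E; and (2) if λ_u(F_E) = F_E, then u F_E u* ⊆ F_E. -/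
namespace FinDirGraph

open scoped CStarAlgebra

variable {G : FinDirGraph} {A : Type} [CStarAlgebra A] [PartialOrder A]
  [StarOrderedRing A]

/-- The set of words `S_μ S_ν*`, `|μ| = |ν|`. -/
def CKFamily.wordSet (F : CKFamily G A) : Set A :=
  {a : A | ∃ μ ν : G.Path, μ.len = ν.len ∧ a = F.sPath μ * star (F.sPath ν)}

/-- The closed span of the words, as a submodule. -/
noncomputable def CKFamily.MM (F : CKFamily G A) : Submodule ℂ A :=
  (Submodule.span ℂ F.wordSet).topologicalClosure

lemma CKFamily.FE_eq (F : CKFamily G A) : F.FE = (F.MM : Set A) := by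
  rw [CKFamily.MM, Submodule.topologicalClosure_coe]
  rfl

lemma CKFamily.word_mem_MM (F : CKFamily G A) {a : A} (h : a ∈ F.wordSet) :
    a ∈ F.MM :=
  Submodule.le_topologicalClosure _ (Submodule.subset_span h)

variable (F : CKFamily G A)

lemma CKFamily.S_mul_Pr (e : G.E) : F.S e * F.P (G.r e) = F.S e := by
  have h0 : star (F.S e * F.P (G.r e) - F.S e) * (F.S e * F.P (G.r e) - F.S e) = 0 := by
    have h1 := F.ck1 e
    have h2 := F.proj_idem (G.r e)
    have h3 := F.proj_sa (G.r e)
    have : star (F.S e * F.P (G.r e) - F.S e) * (F.S e * F.P (G.r e) - F.S e)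
        = F.P (G.r e) * (star (F.S e) * F.S e) * F.P (G.r e)
          - F.P (G.r e) * (star (F.S e) * F.S e)
          - (star (F.S e) * F.S e) * F.P (G.r e) + star (F.S e) * F.S e := by
      rw [star_sub, star_mul, h3]; noncomm_ring
    rw [this, h1]
    simp only [h2]
    abel
  exact sub_eq_zero.mp ((CStarRing.star_mul_self_eq_zero_iff _).mp h0)

lemma CKFamily.S_mul_Pr' (e : G.E) : F.S e * F.P (G.r e) = F.S e := F.S_mul_Pr e

lemma CKFamily.Ps_mul_S (e : G.E) : F.P (G.s e) * F.S e = F.S e := by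
  rw [F.ck3 (G.s e) ⟨e, rfl⟩, Finset.sum_mul]
  rw [Finset.sum_eq_single_of_mem e (by simp)]
  · rw [mul_assoc, F.ck1, F.S_mul_Pr]
  · intro f _ hfe
    rw [mul_assoc, F.ck1' f e hfe, mul_zero]

lemma CKFamily.P_mul_S_ne {v : G.V} {e : G.E} (h : v ≠ G.s e) :
    F.P v * F.S e = 0 := by
  rw [← F.Ps_mul_S e, ← mul_assoc, F.orth v (G.s e) h, zero_mul]

lemma CKFamily.P_mul_sFrom_s6 (v : G.V) (l : List G.E) (h : G.IsPathFrom v l) :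
    F.P v * F.sFrom v l = F.sFrom v l := by
  cases l with
  | nil => exact F.proj_idem v
  | cons e t =>
    show F.P v * (F.S e * F.sFrom (G.r e) t) = F.S e * F.sFrom (G.r e) t
    rw [← mul_assoc, ← h.1, F.Ps_mul_S]

lemma CKFamily.S_mul_sFrom (e : G.E) (v : G.V) (l : List G.E) (h : G.IsPathFrom v l) :
    F.S e * F.sFrom v l = if G.r e = v then F.sFrom v (e :: l) else 0 := by
  rw [← F.P_mul_sFrom_s6 v l h, ← mul_assoc]
  by_cases h' : G.r e = v
  · subst h'
    rw [F.S_mul_Pr, if_pos rfl]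
    rfl
  · rw [if_neg h']
    have : F.S e * F.P v = 0 := by
      rw [← F.S_mul_Pr e, mul_assoc, F.orth (G.r e) v h', mul_zero]
    rw [this, zero_mul]

/-- invariance of MM under continuous linear maps preserving words -/
lemma CKFamily.MM_invar (T : A →ₗ[ℂ] A) (hT : Continuous T)
    (h : ∀ w ∈ F.wordSet, T w ∈ F.MM) : ∀ x ∈ F.MM, T x ∈ F.MM := by
  have key : F.MM ≤ (F.MM).comap T := by
    apply Submodule.topologicalClosure_minimal
    · rw [Submodule.span_le]
      intro w hw
      exact h w hw
    · exact IsClosed.preimage hT (Submodule.isClosed_topologicalClosure _)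
  exact fun x hx => key hx

/-- the linear map x ↦ a * x * b -/
def mulLR (a b : A) : A →ₗ[ℂ] A where
  toFun x := a * x * b
  map_add' x y := by noncomm_ring
  map_smul' c x := by simp [mul_smul_comm, smul_mul_assoc]

lemma mulLR_cont (a b : A) : Continuous (mulLR (A := A) a b) :=
  (continuous_const.mul continuous_id).mul continuous_const

lemma CKFamily.MM_conj (a b : A) (h : ∀ w ∈ F.wordSet, a * w * b ∈ F.MM) :
    ∀ x ∈ F.MM, a * x * b ∈ F.MM :=
  F.MM_invar (mulLR a b) (mulLR_cont a b) h

lemma CKFamily.gen1 (e f : G.E) :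
    ∀ w ∈ F.wordSet, star (F.S e) * w * F.S f ∈ F.MM := by
  rintro w ⟨⟨vμ, lμ, hμ⟩, ⟨vν, lν, hν⟩, hlen, rfl⟩
  simp only [CKFamily.sPath, Path.len] at hlen ⊢
  match lμ, lν, hlen with
  | [], [], _ =>
    show star (F.S e) * (F.P vμ * star (F.P vν)) * F.S f ∈ F.MM
    rw [F.proj_sa]
    rcases eq_or_ne vμ vν with rfl | hne
    · rw [F.proj_idem]
      rcases eq_or_ne vμ (G.s f) with rfl | hvf
      · rw [mul_assoc, F.Ps_mul_S]
        rcases eq_or_ne e f with rfl | hef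
        · rw [F.ck1]
          refine F.word_mem_MM ⟨⟨G.r e, [], trivial⟩, ⟨G.r e, [], trivial⟩, rfl, ?_⟩
          show F.P (G.r e) = F.P (G.r e) * star (F.P (G.r e))
          rw [F.proj_sa, F.proj_idem]
        · rw [F.ck1' e f hef]; exact zero_mem _
      · rw [mul_assoc, F.P_mul_S_ne hvf, mul_zero]; exact zero_mem _
    · rw [F.orth vμ vν hne, mul_zero, zero_mul]; exact zero_mem _
  | a :: tμ, b :: tν, hlen =>
    have e1 : F.sFrom vμ (a :: tμ) = F.S a * F.sFrom (G.r a) tμ := rfl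
    have e2 : F.sFrom vν (b :: tν) = F.S b * F.sFrom (G.r b) tν := rfl
    rw [e1, e2, star_mul]
    have hassoc : star (F.S e) * (F.S a * F.sFrom (G.r a) tμ *
          (star (F.sFrom (G.r b) tν) * star (F.S b))) * F.S f
        = (star (F.S e) * F.S a) *
          (F.sFrom (G.r a) tμ * star (F.sFrom (G.r b) tν)) *
          (star (F.S b) * F.S f) := by noncomm_ring
    rw [hassoc]
    rcases eq_or_ne e a with rfl | hea
    · rcases eq_or_ne b f with rfl | hbf
      · rw [F.ck1 e, F.ck1 b]
        have hY : F.P (G.r e) * F.sFrom (G.r e) tμ = F.sFrom (G.r e) tμ :=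
          F.P_mul_sFrom_s6 _ _ hμ.2
        have hZ : star (F.sFrom (G.r b) tν) * F.P (G.r b)
            = star (F.sFrom (G.r b) tν) := by
          rw [← F.proj_sa, ← star_mul, F.P_mul_sFrom_s6 _ _ hν.2]
        have h4 : F.P (G.r e) * (F.sFrom (G.r e) tμ * star (F.sFrom (G.r b) tν)) *
              F.P (G.r b)
            = (F.P (G.r e) * F.sFrom (G.r e) tμ) *
              (star (F.sFrom (G.r b) tν) * F.P (G.r b)) := by noncomm_ring
        rw [h4, hY, hZ]
        exact F.word_mem_MM ⟨⟨G.r e, tμ, hμ.2⟩, ⟨G.r b, tν, hν.2⟩,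
          Nat.succ_injective hlen, rfl⟩
      · rw [F.ck1' b f hbf, mul_zero]; exact zero_mem _
    · rw [F.ck1' e a hea, zero_mul, zero_mul]; exact zero_mem _

lemma CKFamily.gen2 (e f : G.E) :
    ∀ w ∈ F.wordSet, F.S e * w * star (F.S f) ∈ F.MM := by
  rintro w ⟨⟨vμ, lμ, hμ⟩, ⟨vν, lν, hν⟩, hlen, rfl⟩
  simp only [CKFamily.sPath, Path.len] at hlen ⊢
  have hassoc : F.S e * (F.sFrom vμ lμ * star (F.sFrom vν lν)) * star (F.S f)
      = (F.S e * F.sFrom vμ lμ) * star (F.S f * F.sFrom vν lν) := by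
    rw [star_mul]; noncomm_ring
  rw [hassoc, F.S_mul_sFrom e vμ lμ hμ, F.S_mul_sFrom f vν lν hν]
  by_cases h1 : G.r e = vμ
  · by_cases h2 : G.r f = vν
    · rw [if_pos h1, if_pos h2]
      subst h1; subst h2
      refine F.word_mem_MM ⟨⟨G.s e, e :: lμ, ⟨rfl, hμ⟩⟩, ⟨G.s f, f :: lν, ⟨rfl, hν⟩⟩,
        by simp [Path.len, hlen], rfl⟩
    · rw [if_neg h2, star_zero, mul_zero]; exact zero_mem _
  · rw [if_neg h1, zero_mul]; exact zero_mem _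

end FinDirGraph
open FinDirGraph in
/-- Proposition 4.1 (normalFautos). -/
theorem stmt_6 (G : FinDirGraph) (hns : G.NoSinks)
    (A : Type) [CStarAlgebra A] [PartialOrder A] [StarOrderedRing A]
    (F : CKFamily G A) (hGA : IsGraphCStarAlgebra G A F)
    (u : A) (hu : F.IsUE u) (lam : A →⋆ₐ[ℂ] A) (hlam : F.IsLambdaU u lam) :
    ((∀ x ∈ F.FE, u * x * star u ∈ F.FE) → ∀ x ∈ F.FE, lam x ∈ F.FE) ∧
    (⇑lam '' F.FE = F.FE → ∀ x ∈ F.FE, u * x * star u ∈ F.FE) := by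
  classical
  open scoped CStarAlgebra in
  have hcont : Continuous lam := map_continuous lam
  have hmem : ∀ y : A, y ∈ F.FE ↔ y ∈ F.MM := by
    intro y; rw [F.FE_eq]; exact Iff.rfl
  constructor
  · intro H
    have H' : ∀ x ∈ F.MM, u * x * star u ∈ F.MM := fun x hx =>
      (hmem _).mp (H x ((hmem x).mpr hx))
    have core : ∀ (lμ lν : List G.E) (vμ vν : G.V), G.IsPathFrom vμ lμ →
        G.IsPathFrom vν lν → lμ.length = lν.length →
        lam (F.sFrom vμ lμ * star (F.sFrom vν lν)) ∈ F.MM := by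
      intro lμ
      induction lμ with
      | nil =>
        intro lν vμ vν hμ hν hlen
        match lν, hlen with
        | [], _ =>
          show lam (F.P vμ * star (F.P vν)) ∈ F.MM
          rw [map_mul, map_star, hlam.2, hlam.2]
          exact F.word_mem_MM ⟨⟨vμ, [], trivial⟩, ⟨vν, [], trivial⟩, rfl, rfl⟩
      | cons a tμ ih =>
        intro lν vμ vν hμ hν hlen
        match lν, hlen with
        | b :: tν, hlen =>
          have e1 : F.sFrom vμ (a :: tμ) = F.S a * F.sFrom (G.r a) tμ := rfl
          have e2 : F.sFrom vν (b :: tν) = F.S b * F.sFrom (G.r b) tν := rfl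
          rw [e1, e2]
          have hre : F.S a * F.sFrom (G.r a) tμ * star (F.S b * F.sFrom (G.r b) tν)
              = F.S a * (F.sFrom (G.r a) tμ * star (F.sFrom (G.r b) tν)) *
                star (F.S b) := by
            rw [star_mul]; noncomm_ring
          rw [hre, map_mul, map_mul, map_star, hlam.1, hlam.1]
          set y := lam (F.sFrom (G.r a) tμ * star (F.sFrom (G.r b) tν)) with hy
          have hyM : y ∈ F.MM :=
            ih tν (G.r a) (G.r b) hμ.2 hν.2 (Nat.succ_injective hlen)
          have hz : F.S a * y * star (F.S b) ∈ F.MM :=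
            F.MM_conj _ _ (F.gen2 a b) y hyM
          have hf := H' _ hz
          have hassoc : u * F.S a * y * star (u * F.S b)
              = u * (F.S a * y * star (F.S b)) * star u := by
            rw [star_mul]; noncomm_ring
          rw [hassoc]
          exact hf
    intro x hx
    rw [hmem] at hx ⊢
    refine F.MM_invar lam.toAlgHom.toLinearMap hcont ?_ x hx
    rintro w ⟨⟨vμ, lμ, hμ⟩, ⟨vν, lν, hν⟩, hlen, rfl⟩
    exact core lμ lν vμ vν hμ hν hlen
  · intro himg x hx
    rw [hmem] at hx ⊢
    have one_eq : (1 : A) = ∑ e : G.E, F.S e * star (F.S e) := by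
      rw [← hGA.sum_one]
      rw [Finset.sum_congr rfl fun v _ => F.ck3 v (hns v)]
      exact Finset.sum_fiberwise Finset.univ G.s fun e => F.S e * star (F.S e)
    have split : u * x * star u = ∑ e : G.E, ∑ f : G.E,
        u * (F.S e * star (F.S e) * x * (F.S f * star (F.S f))) * star u := by
      have hx1 : x = ∑ e : G.E, ∑ f : G.E,
          F.S e * star (F.S e) * x * (F.S f * star (F.S f)) := by
        calc x = (∑ e : G.E, F.S e * star (F.S e)) * x *
              (∑ f : G.E, F.S f * star (F.S f)) := by
              rw [← one_eq, one_mul, mul_one]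
          _ = _ := by simp only [Finset.sum_mul, Finset.mul_sum]; rw [Finset.sum_comm]
      conv_lhs => rw [hx1]
      simp only [Finset.mul_sum, Finset.sum_mul]
    rw [split]
    refine Submodule.sum_mem _ fun e _ => Submodule.sum_mem _ fun f _ => ?_
    have ht : star (F.S e) * x * F.S f ∈ F.MM :=
      F.MM_conj _ _ (F.gen1 e f) x hx
    have ht' : star (F.S e) * x * F.S f ∈ F.FE := (hmem _).mpr ht
    rw [← himg] at ht'
    obtain ⟨z, hz, hzeq⟩ := ht'
    have hzM : z ∈ F.MM := (hmem z).mp hz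
    have hz2 : F.S e * z * star (F.S f) ∈ F.MM :=
      F.MM_conj _ _ (F.gen2 e f) z hzM
    have hz3 : lam (F.S e * z * star (F.S f)) ∈ F.FE := by
      rw [← himg]; exact Set.mem_image_of_mem _ ((hmem _).mpr hz2)
    have heq : u * (F.S e * star (F.S e) * x * (F.S f * star (F.S f))) * star u
        = lam (F.S e * z * star (F.S f)) := by
      rw [map_mul, map_mul, map_star, hlam.1, hlam.1, hzeq, star_mul]
      noncomm_ring
    rw [heq]
    exact (hmem _).mp hz3
end

section
/- Let E be a finite directed graph without sinks and let u ∈ U_E be a unitary belonging to F_E^k for some k ≥ 1. Then the following conditions are equivalent: (1) λ_u is a *-automorphism of C*(E) whose inverse equals λ_w for some unitary w ∈ U_E belonging to F_E^l for some l ≥ 1 (λ_u is invertible with localized inverse); (2) the sequence (Ad(u_m*)(u*))_{m≥1} = (u_m* u* u_m)_{m≥1} is eventually constant; (3) the ring A_u is nilpotent; (4) Ξ_u ⊆ D_E^0. -/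
namespace CHS
open FinDirGraph

variable {G : FinDirGraph} {A : Type} [CStarAlgebra A] [PartialOrder A] [StarOrderedRing A]
variable (F : CKFamily G A)

theorem P_mul_P (v w : G.V) : F.P v * F.P w = if v = w then F.P v else 0 := by
  split
  · next h => subst h; exact F.proj_idem v
  · next h => exact F.orth v w h

theorem S_mul_rP (e : G.E) : F.S e * F.P (G.r e) = F.S e := by
  have h : star (F.S e * F.P (G.r e) - F.S e) * (F.S e * F.P (G.r e) - F.S e) = 0 := by
    have h1 : ∀ x : A, star (F.S e) * (F.S e * x) = F.P (G.r e) * x := by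
      intro x; rw [← mul_assoc, F.ck1]
    simp only [star_sub, star_mul, F.proj_sa, sub_mul, mul_sub, mul_assoc, h1]
    simp only [← mul_assoc, F.proj_idem]
    rw [mul_assoc, F.ck1, F.proj_idem, sub_self]
  have := (CStarRing.star_mul_self_eq_zero_iff _).mp h
  have := sub_eq_zero.mp this
  exact this

theorem sP_mul_S (e : G.E) : F.P (G.s e) * F.S e = F.S e := by
  rw [F.ck3 (G.s e) ⟨e, rfl⟩, Finset.sum_mul]
  have hs := Finset.sum_eq_single_of_mem (f := fun f => F.S f * star (F.S f) * F.S e)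
    (s := Finset.univ.filter (fun f => G.s f = G.s e))
    e (Finset.mem_filter.mpr ⟨Finset.mem_univ e, rfl⟩)
    (fun f _ hfe => by rw [mul_assoc, F.ck1' f e hfe, mul_zero])
  rw [hs, mul_assoc, F.ck1, S_mul_rP]

theorem P_mul_S (v : G.V) (e : G.E) : F.P v * F.S e = if v = G.s e then F.S e else 0 := by
  split
  · next h => subst h; exact sP_mul_S F e
  · next h =>
    rw [← sP_mul_S F e, ← mul_assoc, F.orth v (G.s e) h, zero_mul]

theorem star_S_mul_S (e f : G.E) : star (F.S e) * F.S f = if e = f then F.P (G.r e) else 0 := by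
  split
  · next h => subst h; exact F.ck1 e
  · next h => exact F.ck1' e f h

@[simp] theorem sFrom_nil (v : G.V) : F.sFrom v [] = F.P v := rfl
@[simp] theorem sFrom_cons (v : G.V) (e : G.E) (l : List G.E) :
    F.sFrom v (e :: l) = F.S e * F.sFrom (G.r e) l := rfl
@[simp] theorem rangeFrom_nil (v : G.V) : G.rangeFrom v [] = v := rfl
@[simp] theorem rangeFrom_cons (v : G.V) (e : G.E) (l : List G.E) :
    G.rangeFrom v (e :: l) = G.rangeFrom (G.r e) l := rfl

theorem sFrom_mul_rangeP : ∀ (l : List G.E) (v : G.V),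
    F.sFrom v l * F.P (G.rangeFrom v l) = F.sFrom v l
  | [], v => F.proj_idem v
  | e :: l, v => by
    rw [sFrom_cons, rangeFrom_cons, mul_assoc, sFrom_mul_rangeP l (G.r e)]

theorem sFrom_mul_P (l : List G.E) (v : G.V) (w : G.V) :
    F.sFrom v l * F.P w = if w = G.rangeFrom v l then F.sFrom v l else 0 := by
  split
  · next h => subst h; exact sFrom_mul_rangeP F l v
  · next h =>
    conv_lhs => rw [← sFrom_mul_rangeP F l v]
    rw [mul_assoc, F.orth _ _ (fun hh => h hh.symm), mul_zero]

theorem P_mul_sFrom : ∀ (l : List G.E) (v : G.V), G.IsPathFrom v l →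
    F.P v * F.sFrom v l = F.sFrom v l
  | [], v, _ => F.proj_idem v
  | e :: l, v, h => by
    rw [sFrom_cons, ← mul_assoc, P_mul_S, if_pos h.1.symm]

theorem P_mul_sFrom_zero : ∀ (l : List G.E) (v : G.V), ¬ G.IsPathFrom v l →
    F.P v * F.sFrom v l = 0
  | [], v, h => absurd trivial h
  | e :: l, v, h => by
    rw [sFrom_cons, ← mul_assoc, P_mul_S]
    split
    · next hv =>
      have hnp : ¬ G.IsPathFrom (G.r e) l := fun hh => h ⟨hv.symm, hh⟩
      rw [← S_mul_rP F e, mul_assoc, P_mul_sFrom_zero l (G.r e) hnp, mul_zero]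
    · next hv => rw [zero_mul]

theorem star_sFrom_mul_sFrom : ∀ (l₁ l₂ : List G.E) (v₁ v₂ : G.V),
    G.IsPathFrom v₁ l₁ → G.IsPathFrom v₂ l₂ → l₁.length = l₂.length →
    star (F.sFrom v₁ l₁) * F.sFrom v₂ l₂ =
      if v₁ = v₂ ∧ l₁ = l₂ then F.P (G.rangeFrom v₁ l₁) else 0
  | [], [], v₁, v₂, _, _, _ => by
    rw [sFrom_nil, sFrom_nil, F.proj_sa, rangeFrom_nil, P_mul_P]
    simp
  | [], f :: l₂, _, _, _, _, hlen => by simp at hlen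
  | e :: l₁, [], _, _, _, _, hlen => by simp at hlen
  | e :: l₁, f :: l₂, v₁, v₂, h₁, h₂, hlen => by
    rw [sFrom_cons, sFrom_cons, star_mul, mul_assoc, ← mul_assoc (star (F.S e)),
      star_S_mul_S]
    by_cases hef : e = f
    · subst hef
      rw [if_pos rfl, ← mul_assoc, mul_assoc _ _ (F.sFrom (G.r e) l₂),
        P_mul_sFrom F l₂ (G.r e) h₂.2,
        star_sFrom_mul_sFrom l₁ l₂ (G.r e) (G.r e) h₁.2 h₂.2 (by simpa using hlen)]
      have hv : v₁ = v₂ := h₁.1.symm.trans h₂.1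
      subst hv
      simp only [rangeFrom_cons, true_and, List.cons.injEq, eq_self_iff_true]
    · rw [if_neg hef, if_neg (by
        rintro ⟨-, hc⟩
        exact hef (List.cons.injEq .. ▸ hc).1)]
      simp

theorem isPathFrom_append : ∀ (l₁ l₂ : List G.E) (v : G.V),
    G.IsPathFrom v (l₁ ++ l₂) ↔
      (G.IsPathFrom v l₁ ∧ G.IsPathFrom (G.rangeFrom v l₁) l₂)
  | [], l₂, v => by simp [IsPathFrom]
  | e :: l₁, l₂, v => by
    constructor
    · rintro ⟨h1, h2⟩
      have h3 := (isPathFrom_append l₁ l₂ (G.r e)).mp h2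
      exact ⟨⟨h1, h3.1⟩, h3.2⟩
    · rintro ⟨⟨h1, h2⟩, h3⟩
      exact ⟨h1, (isPathFrom_append l₁ l₂ (G.r e)).mpr ⟨h2, h3⟩⟩

theorem rangeFrom_append : ∀ (l₁ l₂ : List G.E) (v : G.V),
    G.rangeFrom v (l₁ ++ l₂) = G.rangeFrom (G.rangeFrom v l₁) l₂
  | [], l₂, v => rfl
  | e :: l₁, l₂, v => by
    rw [List.cons_append, rangeFrom_cons, rangeFrom_cons,
      rangeFrom_append l₁ l₂ (G.r e)]

theorem sFrom_append : ∀ (l₁ l₂ : List G.E) (v : G.V), G.IsPathFrom v (l₁ ++ l₂) →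
    F.sFrom v (l₁ ++ l₂) = F.sFrom v l₁ * F.sFrom (G.rangeFrom v l₁) l₂
  | [], l₂, v, h => by
    rw [List.nil_append, sFrom_nil, rangeFrom_nil,
      P_mul_sFrom F l₂ v h]
  | e :: l₁, l₂, v, h => by
    rw [List.cons_append, sFrom_cons, sFrom_cons, rangeFrom_cons,
      sFrom_append l₁ l₂ (G.r e) h.2, mul_assoc]

end CHS
namespace CHS
open FinDirGraph

variable {G : FinDirGraph} {A : Type} [CStarAlgebra A] [PartialOrder A] [StarOrderedRing A]
variable (F : CKFamily G A)

theorem mem_FEk_of_word {v w : G.V} {l₁ l₂ : List G.E} {n : ℕ}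
    (h₁ : G.IsPathFrom v l₁) (h₂ : G.IsPathFrom w l₂)
    (e₁ : l₁.length = n) (e₂ : l₂.length = n) :
    F.sFrom v l₁ * star (F.sFrom w l₂) ∈ F.FEk n :=
  Submodule.subset_span ⟨⟨v, l₁, h₁⟩, ⟨w, l₂, h₂⟩, e₁, e₂, rfl⟩

theorem FEk_le {n : ℕ} (N : Submodule ℂ A)
    (h : ∀ (v w : G.V) (l₁ l₂ : List G.E), G.IsPathFrom v l₁ → G.IsPathFrom w l₂ →
      l₁.length = n → l₂.length = n → F.sFrom v l₁ * star (F.sFrom w l₂) ∈ N) :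
    F.FEk n ≤ N := by
  rw [CKFamily.FEk, Submodule.span_le]
  rintro a ⟨μ, ν, hμ, hν, rfl⟩
  exact h μ.src ν.src μ.edges ν.edges μ.ok ν.ok hμ hν

theorem star_mem_FEk {n : ℕ} {x : A} (hx : x ∈ F.FEk n) : star x ∈ F.FEk n := by
  induction hx using Submodule.span_induction with
  | mem a ha =>
    obtain ⟨μ, ν, hμ, hν, rfl⟩ := ha
    rw [star_mul, star_star]
    exact mem_FEk_of_word F ν.ok μ.ok hν hμ
  | zero => rw [star_zero]; exact zero_mem _
  | add x y _ _ hx hy => rw [star_add]; exact add_mem hx hy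
  | smul c x _ hx => rw [star_smul]; exact Submodule.smul_mem _ _ hx

theorem mul_mem_FEk {n : ℕ} {x y : A} (hx : x ∈ F.FEk n) (hy : y ∈ F.FEk n) :
    x * y ∈ F.FEk n := by
  induction hx using Submodule.span_induction with
  | mem a ha =>
    obtain ⟨μ, ν, hμ, hν, rfl⟩ := ha
    induction hy using Submodule.span_induction with
    | mem b hb =>
      obtain ⟨α, β, hα, hβ, rfl⟩ := hb
      show F.sFrom μ.src μ.edges * star (F.sFrom ν.src ν.edges) *
        (F.sFrom α.src α.edges * star (F.sFrom β.src β.edges)) ∈ F.FEk n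
      rw [mul_assoc, ← mul_assoc (star (F.sFrom ν.src ν.edges)),
        star_sFrom_mul_sFrom F ν.edges α.edges ν.src α.src ν.ok α.ok (hν.trans hα.symm)]
      split
      · rw [← mul_assoc, sFrom_mul_P]
        split
        · exact mem_FEk_of_word F μ.ok β.ok hμ hβ
        · rw [zero_mul]; exact zero_mem _
      · rw [zero_mul, mul_zero]; exact zero_mem _
    | zero => rw [mul_zero]; exact zero_mem _
    | add y z _ _ h1 h2 => rw [mul_add]; exact add_mem h1 h2
    | smul c y _ h1 => rw [mul_smul_comm]; exact Submodule.smul_mem _ _ h1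
  | zero => rw [zero_mul]; exact zero_mem _
  | add x z _ _ h1 h2 => rw [add_mul]; exact add_mem h1 h2
  | smul c x _ h1 => rw [smul_mul_assoc]; exact Submodule.smul_mem _ _ h1

variable {F}

theorem one_eq_sum (hGA : IsGraphCStarAlgebra G A F) (hns : G.NoSinks) : (1 : A) = ∑ e : G.E, F.S e * star (F.S e) := by
  rw [← hGA.sum_one]
  rw [← Finset.sum_fiberwise_of_maps_to (g := G.s) (t := Finset.univ)
    (fun e _ => Finset.mem_univ (G.s e)) (fun e => F.S e * star (F.S e))]
  exact Finset.sum_congr rfl fun v _ => F.ck3 v (hns v)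

theorem P_eq_word (v : G.V) : F.P v = F.sFrom v [] * star (F.sFrom v []) := by
  rw [sFrom_nil, F.proj_sa, F.proj_idem]

theorem one_mem_FEk_zero (hGA : IsGraphCStarAlgebra G A F) : (1 : A) ∈ F.FEk 0 := by
  rw [← hGA.sum_one]
  exact Submodule.sum_mem _ fun v _ => by
    rw [P_eq_word]
    exact mem_FEk_of_word F trivial trivial rfl rfl

theorem eq_of_mul_S (hGA : IsGraphCStarAlgebra G A F) (hns : G.NoSinks) {x y : A} (h : ∀ e, x * F.S e = y * F.S e) : x = y := by
  have hx : x * 1 = y * 1 := by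
    rw [one_eq_sum hGA hns, Finset.mul_sum, Finset.mul_sum]
    exact Finset.sum_congr rfl fun e _ => by
      rw [← mul_assoc, ← mul_assoc, h e]
  simpa using hx

theorem FEk_le_succ (hGA : IsGraphCStarAlgebra G A F) (hns : G.NoSinks) (n : ℕ) : F.FEk n ≤ F.FEk (n + 1) := by
  apply FEk_le
  intro v w l₁ l₂ h₁ h₂ e₁ e₂
  by_cases hr : G.rangeFrom v l₁ = G.rangeFrom w l₂
  · have hexp : F.sFrom v l₁ * star (F.sFrom w l₂) =
        ∑ f ∈ Finset.univ.filter (fun f => G.s f = G.rangeFrom v l₁),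
          F.sFrom v l₁ * (F.S f * star (F.S f)) * star (F.sFrom w l₂) := by
      conv_lhs => rw [← sFrom_mul_rangeP F l₁ v]
      rw [F.ck3 (G.rangeFrom v l₁) (hns _), Finset.mul_sum, Finset.sum_mul]
    rw [hexp]
    apply Submodule.sum_mem
    intro f hf
    have hsf : G.s f = G.rangeFrom v l₁ := (Finset.mem_filter.mp hf).2
    have key₁ : F.sFrom v (l₁ ++ [f]) = F.sFrom v l₁ * F.S f := by
      rw [sFrom_append F l₁ [f] v
        ((isPathFrom_append l₁ [f] v).mpr ⟨h₁, hsf, trivial⟩)]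
      rw [sFrom_cons, sFrom_nil, S_mul_rP]
    have key₂ : F.sFrom w (l₂ ++ [f]) = F.sFrom w l₂ * F.S f := by
      rw [sFrom_append F l₂ [f] w
        ((isPathFrom_append l₂ [f] w).mpr ⟨h₂, hr ▸ hsf, trivial⟩)]
      rw [sFrom_cons, sFrom_nil, S_mul_rP]
    have : F.sFrom v l₁ * (F.S f * star (F.S f)) * star (F.sFrom w l₂) =
        F.sFrom v (l₁ ++ [f]) * star (F.sFrom w (l₂ ++ [f])) := by
      rw [key₁, key₂, star_mul, mul_assoc, mul_assoc, mul_assoc]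
    rw [this]
    exact mem_FEk_of_word F
      ((isPathFrom_append l₁ [f] v).mpr ⟨h₁, hsf, trivial⟩)
      ((isPathFrom_append l₂ [f] w).mpr ⟨h₂, hr ▸ hsf, trivial⟩)
      (by simp [e₁]) (by simp [e₂])
  · have hz : F.sFrom v l₁ * star (F.sFrom w l₂) = 0 := by
      conv_lhs => rw [← sFrom_mul_rangeP F l₁ v, ← sFrom_mul_rangeP F l₂ w]
      rw [star_mul, F.proj_sa, ← mul_assoc, mul_assoc (F.sFrom v l₁),
        F.orth _ _ hr, mul_zero, zero_mul]
    rw [hz]; exact zero_mem _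

theorem FEk_mono (hGA : IsGraphCStarAlgebra G A F) (hns : G.NoSinks) {n m : ℕ} (h : n ≤ m) : F.FEk n ≤ F.FEk m := by
  induction h with
  | refl => exact le_rfl
  | step _ ih => exact le_trans ih (FEk_le_succ hGA hns _)

end CHS
namespace CHS
open FinDirGraph

variable {G : FinDirGraph} {A : Type} [CStarAlgebra A] [PartialOrder A] [StarOrderedRing A]
variable {F : CKFamily G A}

theorem pPath_len_zero {μ : G.Path} (hμ : μ.len = 0) : F.pPath μ = F.P μ.src := by
  have he : μ.edges = [] := List.length_eq_zero_iff.mp hμ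
  show F.sFrom μ.src μ.edges * star (F.sFrom μ.src μ.edges) = F.P μ.src
  rw [he, sFrom_nil, F.proj_sa, F.proj_idem]

theorem P_mem_DEk_zero (v : G.V) : F.P v ∈ F.DEk 0 :=
  Submodule.subset_span ⟨⟨v, [], trivial⟩, rfl,
    (pPath_len_zero (μ := ⟨v, [], trivial⟩) rfl).symm⟩

/-- Induction principle for `DEk 0`. -/
theorem DEk_zero_le (N : Submodule ℂ A) (h : ∀ v, F.P v ∈ N) : F.DEk 0 ≤ N := by
  rw [CKFamily.DEk, Submodule.span_le]
  rintro a ⟨μ, hμ, rfl⟩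
  rw [pPath_len_zero hμ]
  exact h μ.src

theorem FEk_zero_le_DEk_zero : F.FEk 0 ≤ F.DEk 0 := by
  apply FEk_le
  intro v w l₁ l₂ h₁ h₂ e₁ e₂
  rw [List.length_eq_zero_iff.mp e₁, List.length_eq_zero_iff.mp e₂, sFrom_nil, sFrom_nil,
    F.proj_sa, P_mul_P]
  split
  · exact P_mem_DEk_zero v
  · exact zero_mem _

theorem starU_mul_D_mul_U {y : A} (hyc : ∀ v, y * F.P v = F.P v * y)
    (hy1 : star y * y = 1) {d : A} (hd : d ∈ F.DEk 0) : star y * d * y = d := by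
  induction hd using Submodule.span_induction with
  | mem a ha =>
    obtain ⟨μ, hμ, rfl⟩ := ha
    rw [pPath_len_zero hμ]
    have : star y * F.P μ.src * y = F.P μ.src * (star y * y) := by
      have hc : star y * F.P μ.src = F.P μ.src * star y := by
        have h2 := congrArg star (hyc μ.src)
        rw [star_mul, star_mul, F.proj_sa] at h2
        exact h2.symm
      rw [hc, mul_assoc]
    rw [this, hy1, mul_one]
  | zero => rw [mul_zero, zero_mul]
  | add x y _ _ h1 h2 => rw [mul_add, add_mul, h1, h2]
  | smul c x _ h1 => rw [mul_smul_comm, smul_mul_assoc, h1]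

theorem S_star_mul_D_mul_S (e f : G.E) {d : A} (hd : d ∈ F.DEk 0) :
    star (F.S e) * d * F.S f ∈ F.DEk 0 := by
  induction hd using Submodule.span_induction with
  | mem a ha =>
    obtain ⟨μ, hμ, rfl⟩ := ha
    rw [pPath_len_zero hμ]
    have : star (F.S e) * F.P μ.src = star (F.P μ.src * F.S e) := by
      rw [star_mul, F.proj_sa]
    rw [this, P_mul_S]
    split
    · rw [star_S_mul_S]
      split
      · exact P_mem_DEk_zero _
      · exact zero_mem _
    · rw [star_zero, zero_mul]; exact zero_mem _
  | zero => rw [mul_zero, zero_mul]; exact zero_mem _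
  | add x y _ _ h1 h2 => rw [mul_add, add_mul]; exact add_mem h1 h2
  | smul c x _ h1 => rw [mul_smul_comm, smul_mul_assoc]; exact Submodule.smul_mem _ _ h1

theorem P_mul_D_mul_P (v w : G.V) {d : A} (hd : d ∈ F.DEk 0) :
    F.P v * d * F.P w ∈ F.DEk 0 := by
  induction hd using Submodule.span_induction with
  | mem a ha =>
    obtain ⟨μ, hμ, rfl⟩ := ha
    rw [pPath_len_zero hμ, P_mul_P]
    split
    · rw [P_mul_P]
      split
      · exact P_mem_DEk_zero _
      · exact zero_mem _
    · rw [zero_mul]; exact zero_mem _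
  | zero => rw [mul_zero, zero_mul]; exact zero_mem _
  | add x y _ _ h1 h2 => rw [mul_add, add_mul]; exact add_mem h1 h2
  | smul c x _ h1 => rw [mul_smul_comm, smul_mul_assoc]; exact Submodule.smul_mem _ _ h1

theorem hom_fix_D (lam : A →⋆ₐ[ℂ] A) (hP : ∀ v, lam (F.P v) = F.P v)
    {d : A} (hd : d ∈ F.DEk 0) : lam d = d := by
  induction hd using Submodule.span_induction with
  | mem a ha =>
    obtain ⟨μ, hμ, rfl⟩ := ha
    rw [pPath_len_zero hμ, hP]
  | zero => exact map_zero _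
  | add x y _ _ h1 h2 => rw [map_add, h1, h2]
  | smul c x _ h1 => rw [map_smul, h1]

theorem star_S_mul_sFrom (e : G.E) {v : G.V} {a : G.E} {t : List G.E}
    (h : G.IsPathFrom v (a :: t)) :
    star (F.S e) * F.sFrom v (a :: t) = if e = a then F.sFrom (G.r e) t else 0 := by
  rw [sFrom_cons, ← mul_assoc, star_S_mul_S]
  split
  · next hea => subst hea; exact P_mul_sFrom F t (G.r e) h.2
  · rw [zero_mul]

theorem compress_mem_FEk {n : ℕ} {x : A} (hx : x ∈ F.FEk (n + 1)) (e f : G.E) :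
    star (F.S e) * x * F.S f ∈ F.FEk n := by
  induction hx using Submodule.span_induction with
  | mem a ha =>
    obtain ⟨μ, ν, hμ, hν, rfl⟩ := ha
    obtain ⟨a₁, t₁, he₁⟩ : ∃ a₁ t₁, μ.edges = a₁ :: t₁ := by
      cases hh : μ.edges with
      | nil => rw [Path.len, hh] at hμ; simp at hμ
      | cons a t => exact ⟨a, t, rfl⟩
    obtain ⟨a₂, t₂, he₂⟩ : ∃ a₂ t₂, ν.edges = a₂ :: t₂ := by
      cases hh : ν.edges with
      | nil => rw [Path.len, hh] at hν; simp at hν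
      | cons a t => exact ⟨a, t, rfl⟩
    have hμok := μ.ok; have hνok := ν.ok
    rw [he₁] at hμok; rw [he₂] at hνok
    show star (F.S e) * (F.sFrom μ.src μ.edges * star (F.sFrom ν.src ν.edges)) * F.S f
      ∈ F.FEk n
    have hstar : star (F.sFrom ν.src ν.edges) * F.S f
        = star (star (F.S f) * F.sFrom ν.src ν.edges) := by
      rw [star_mul, star_star]
    rw [← mul_assoc, mul_assoc _ _ (F.S f), hstar, he₁, he₂,
      star_S_mul_sFrom e hμok, star_S_mul_sFrom f hνok]
    have hl₁ : t₁.length = n := by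
      have := hμ; rw [Path.len, he₁] at this; simpa using this
    have hl₂ : t₂.length = n := by
      have := hν; rw [Path.len, he₂] at this; simpa using this
    split
    · next hea =>
      split
      · next hfa =>
        exact mem_FEk_of_word F (hea ▸ hμok.2) (hfa ▸ hνok.2) hl₁ hl₂
      · rw [star_zero, mul_zero]; exact zero_mem _
    · rw [zero_mul]; exact zero_mem _
  | zero => rw [mul_zero, zero_mul]; exact zero_mem _
  | add x y _ _ h1 h2 =>
    rw [mul_add, add_mul]; exact add_mem h1 h2
  | smul c x _ h1 =>
    rw [mul_smul_comm, smul_mul_assoc]; exact Submodule.smul_mem _ _ h1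

/-- The product of the `S e` along a list of edges (no projections). -/
def listProd (F : CKFamily G A) (l : List G.E) : A := (l.map F.S).prod

@[simp] theorem listProd_nil : listProd F [] = 1 := rfl
@[simp] theorem listProd_cons (e : G.E) (l : List G.E) :
    listProd F (e :: l) = F.S e * listProd F l := by
  rw [listProd, listProd, List.map_cons, List.prod_cons]

theorem listProd_append (l₁ l₂ : List G.E) :
    listProd F (l₁ ++ l₂) = listProd F l₁ * listProd F l₂ := by
  rw [listProd, listProd, listProd, List.map_append, List.prod_append]

theorem sFrom_eq_listProd (v : G.V) : ∀ l : List G.E,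
    F.sFrom v l = listProd F l * F.P (G.rangeFrom v l) := by
  intro l
  induction l generalizing v with
  | nil => rw [sFrom_nil, listProd_nil, rangeFrom_nil, one_mul]
  | cons e t ih =>
    rw [sFrom_cons, listProd_cons, rangeFrom_cons, ih (G.r e), mul_assoc]

/-- Compression of `F_E^m` by products of `S`'s of length `n ≥ m` lands in `D_E^0`. -/
theorem compressL (hGA : IsGraphCStarAlgebra G A F) (hns : G.NoSinks) :
    ∀ (n m : ℕ) (_ : m ≤ n) (x : A) (_ : x ∈ F.FEk m)
    (lα lβ : List G.E) (_ : lα.length = n) (_ : lβ.length = n),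
    star (listProd F lα) * x * listProd F lβ ∈ F.DEk 0 := by
  intro n
  induction n with
  | zero =>
    intro m hm x hx lα lβ hlα hlβ
    obtain rfl := List.length_eq_zero_iff.mp hlα
    obtain rfl := List.length_eq_zero_iff.mp hlβ
    rw [listProd_nil, star_one, one_mul, mul_one]
    exact FEk_zero_le_DEk_zero (Nat.le_zero.mp hm ▸ hx)
  | succ n ih =>
    intro m hm x hx lα lβ hlα hlβ
    obtain ⟨a, tα, rfl⟩ : ∃ a tα, lα = a :: tα := by
      cases lα with
      | nil => simp at hlα
      | cons a t => exact ⟨a, t, rfl⟩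
    obtain ⟨b, tβ, rfl⟩ : ∃ b tβ, lβ = b :: tβ := by
      cases lβ with
      | nil => simp at hlβ
      | cons b t => exact ⟨b, t, rfl⟩
    have hkey : star (listProd F (a :: tα)) * x * listProd F (b :: tβ)
        = star (listProd F tα) * (star (F.S a) * x * F.S b) * listProd F tβ := by
      rw [listProd_cons, listProd_cons, star_mul]
      simp only [mul_assoc]
    rw [hkey]
    cases m with
    | zero =>
      have hx1 : x ∈ F.FEk (0 + 1) := FEk_le_succ hGA hns 0 hx
      exact ih 0 (Nat.zero_le n) _ (compress_mem_FEk hx1 a b) tα tβ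
        (by simpa using hlα) (by simpa using hlβ)
    | succ m' =>
      exact ih m' (Nat.succ_le_succ_iff.mp hm) _ (compress_mem_FEk hx a b) tα tβ
        (by simpa using hlα) (by simpa using hlβ)

end CHS
namespace CHS
open FinDirGraph

variable {G : FinDirGraph} {A : Type} [CStarAlgebra A] [PartialOrder A] [StarOrderedRing A]
variable {F : CKFamily G A}

/-- `x` commutes with all vertex projections. -/
def CommP (F : CKFamily G A) (x : A) : Prop := ∀ v, x * F.P v = F.P v * x

theorem CommP.star {x : A} (hx : CommP F x) : CommP F (star x) := by
  intro v
  have h2 := congrArg Star.star (hx v)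
  rw [star_mul, star_mul, F.proj_sa] at h2
  exact h2.symm

theorem CommP.mul {x y : A} (hx : CommP F x) (hy : CommP F y) : CommP F (x * y) := by
  intro v
  rw [mul_assoc, hy v, ← mul_assoc, hx v, mul_assoc]

theorem CommP.one : CommP F (1 : A) := fun v => by rw [one_mul, mul_one]

theorem shift_mul_S {x : A} (hx : CommP F x) (e : G.E) :
    F.shift x * F.S e = F.S e * x := by
  rw [CKFamily.shift, Finset.sum_mul]
  have hs := Finset.sum_eq_single_of_mem
    (f := fun f => F.S f * x * star (F.S f) * F.S e)
    (s := (Finset.univ : Finset G.E)) e (Finset.mem_univ e)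
    (fun f _ hfe => by
      rw [mul_assoc, star_S_mul_S, if_neg hfe, mul_zero])
  rw [hs, mul_assoc, star_S_mul_S, if_pos rfl, mul_assoc, hx (G.r e),
    ← mul_assoc, S_mul_rP]

theorem shift_star (x : A) : F.shift (star x) = star (F.shift x) := by
  rw [CKFamily.shift, CKFamily.shift, star_sum]
  exact Finset.sum_congr rfl fun e _ => by
    rw [star_mul, star_mul, star_star, mul_assoc]

theorem star_S_mul_shift {x : A} (hx : CommP F x) (e : G.E) :
    star (F.S e) * F.shift x = x * star (F.S e) := by
  have h := congrArg Star.star (shift_mul_S hx.star e)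
  rw [star_mul, star_mul, star_star, ← shift_star, star_star] at h
  exact h

theorem CommP.shift {x : A} (hx : CommP F x) : CommP F (F.shift x) := by
  intro v
  rw [CKFamily.shift, Finset.sum_mul, Finset.mul_sum]
  refine Finset.sum_congr rfl fun e _ => ?_
  by_cases hv : v = G.s e
  · subst hv
    have hA : Star.star (F.S e) * F.P (G.s e) = Star.star (F.S e) := by
      rw [← F.proj_sa, ← star_mul, sP_mul_S]
    have hB : ∀ y : A, F.P (G.s e) * (F.S e * y) = F.S e * y := fun y => by
      rw [← mul_assoc, sP_mul_S]
    simp only [mul_assoc, hA, hB]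
  · have hA : Star.star (F.S e) * F.P v = 0 := by
      rw [← F.proj_sa, ← star_mul, P_mul_S, if_neg hv, star_zero]
    have hB : ∀ y : A, F.P v * (F.S e * y) = 0 := fun y => by
      rw [← mul_assoc, P_mul_S, if_neg hv, zero_mul]
    simp only [mul_assoc, hA, hB, mul_zero]

theorem shift_mul_shift (x : A) {y : A} (hy : CommP F y) :
    F.shift x * F.shift y = F.shift (x * y) := by
  have h1 : F.shift x * F.shift y = ∑ e : G.E, F.S e * x * (star (F.S e) * F.shift y) := by
    show (∑ e : G.E, F.S e * x * star (F.S e)) * F.shift y = _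
    rw [Finset.sum_mul]
    exact Finset.sum_congr rfl fun e _ => by rw [mul_assoc]
  rw [h1]
  show _ = ∑ e : G.E, F.S e * (x * y) * star (F.S e)
  exact Finset.sum_congr rfl fun e _ => by
    rw [star_S_mul_shift hy, ← mul_assoc, mul_assoc (F.S e) x y]

theorem shift_one (hGA : IsGraphCStarAlgebra G A F) (hns : G.NoSinks) :
    F.shift (1 : A) = 1 := by
  show (∑ e : G.E, F.S e * 1 * star (F.S e)) = 1
  simp only [mul_one]
  exact (one_eq_sum hGA hns).symm

theorem CommP.shift_iter {x : A} (hx : CommP F x) (n : ℕ) :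
    CommP F (F.shift^[n] x) := by
  induction n with
  | zero => exact hx
  | succ n ih => rw [Function.iterate_succ_apply']; exact ih.shift

theorem shift_iter_star (x : A) (n : ℕ) :
    F.shift^[n] (star x) = star (F.shift^[n] x) := by
  induction n with
  | zero => rfl
  | succ n ih => rw [Function.iterate_succ_apply', Function.iterate_succ_apply', ih,
      shift_star]

theorem shift_iter_mul (x : A) {y : A} (hy : CommP F y) (n : ℕ) :
    F.shift^[n] x * F.shift^[n] y = F.shift^[n] (x * y) := by
  induction n with
  | zero => rfl
  | succ n ih =>
    rw [Function.iterate_succ_apply', Function.iterate_succ_apply',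
      Function.iterate_succ_apply', shift_mul_shift _ (hy.shift_iter n), ih]

theorem shift_iter_one (hGA : IsGraphCStarAlgebra G A F) (hns : G.NoSinks) (n : ℕ) :
    F.shift^[n] (1 : A) = 1 := by
  induction n with
  | zero => rfl
  | succ n ih => rw [Function.iterate_succ_apply', ih, shift_one hGA hns]

theorem shift_iter_mul_listProd {x : A} (hx : CommP F x) :
    ∀ (l : List G.E), F.shift^[l.length] x * listProd F l = listProd F l * x
  | [] => by rw [List.length_nil, Function.iterate_zero_apply, listProd_nil, one_mul,
      mul_one]
  | e :: t => by
    rw [List.length_cons, listProd_cons, Function.iterate_succ_apply', ← mul_assoc,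
      shift_mul_S (hx.shift_iter t.length) e, mul_assoc,
      shift_iter_mul_listProd hx t, ← mul_assoc]

theorem listProd_mul_shift_iter {x : A} (hx : CommP F x) (l : List G.E) :
    star (listProd F l) * F.shift^[l.length] x = x * star (listProd F l) := by
  have h := congrArg Star.star (shift_iter_mul_listProd hx.star l)
  rw [star_mul, star_mul, star_star, ← shift_iter_star, star_star] at h
  exact h

theorem shift_iter_mul_sFrom {x : A} (hx : CommP F x) {l : List G.E} {n : ℕ}
    (hn : l.length = n) (v : G.V) :
    F.shift^[n] x * F.sFrom v l = F.sFrom v l * x := by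
  subst hn
  rw [sFrom_eq_listProd, ← mul_assoc, shift_iter_mul_listProd hx l, mul_assoc,
    hx (G.rangeFrom v l), ← mul_assoc]

theorem star_sFrom_mul_shift_iter {x : A} (hx : CommP F x) {l : List G.E} {n : ℕ}
    (hn : l.length = n) (v : G.V) :
    star (F.sFrom v l) * F.shift^[n] x = x * star (F.sFrom v l) := by
  have h := congrArg Star.star (shift_iter_mul_sFrom hx.star hn v)
  rw [star_mul, star_mul, star_star, ← shift_iter_star, star_star] at h
  exact h

theorem shift_iter_comm_FEk {x y : A} {n : ℕ} (hx : x ∈ F.FEk n) (hy : CommP F y) :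
    F.shift^[n] y * x = x * F.shift^[n] y := by
  induction hx using Submodule.span_induction with
  | mem a ha =>
    obtain ⟨μ, ν, hμ, hν, rfl⟩ := ha
    show F.shift^[n] y * (F.sFrom μ.src μ.edges * star (F.sFrom ν.src ν.edges))
      = F.sFrom μ.src μ.edges * star (F.sFrom ν.src ν.edges) * F.shift^[n] y
    rw [← mul_assoc, shift_iter_mul_sFrom hy hμ, mul_assoc, mul_assoc,
      star_sFrom_mul_shift_iter hy hν, ← mul_assoc]
  | zero => rw [mul_zero, zero_mul]
  | add x y _ _ h1 h2 => rw [mul_add, add_mul, h1, h2]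
  | smul c x _ h1 => rw [mul_smul_comm, smul_mul_assoc, h1]

theorem S_mul_sFrom {e : G.E} {v : G.V} {l : List G.E} (h : G.IsPathFrom v l) :
    F.S e * F.sFrom v l = if G.r e = v then F.sFrom (G.s e) (e :: l) else 0 := by
  split
  · next hr => rw [sFrom_cons, hr]
  · next hr =>
    have h0 : F.S e * F.P v = 0 := by
      rw [← S_mul_rP F e, mul_assoc, F.orth _ _ hr, mul_zero]
    rw [← P_mul_sFrom F l v h, ← mul_assoc, h0, zero_mul]

theorem shift_zero : F.shift (0 : A) = 0 := by
  simp [CKFamily.shift]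

theorem shift_add (x y : A) : F.shift (x + y) = F.shift x + F.shift y := by
  simp [CKFamily.shift, mul_add, add_mul, Finset.sum_add_distrib]

theorem shift_smul (c : ℂ) (x : A) : F.shift (c • x) = c • F.shift x := by
  simp [CKFamily.shift, mul_smul_comm, smul_mul_assoc, Finset.smul_sum]

theorem shift_mem_FEk {x : A} {n : ℕ} (hx : x ∈ F.FEk n) :
    F.shift x ∈ F.FEk (n + 1) := by
  induction hx using Submodule.span_induction with
  | mem a ha =>
    obtain ⟨μ, ν, hμ, hν, rfl⟩ := ha
    have hμ' : μ.edges.length = n := hμ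
    have hν' : ν.edges.length = n := hν
    rw [CKFamily.shift]
    apply Submodule.sum_mem
    intro e _
    show F.S e * (F.sFrom μ.src μ.edges * star (F.sFrom ν.src ν.edges)) * star (F.S e)
      ∈ F.FEk (n + 1)
    have hT : F.S e * (F.sFrom μ.src μ.edges * star (F.sFrom ν.src ν.edges)) * star (F.S e)
        = (F.S e * F.sFrom μ.src μ.edges) * star (F.S e * F.sFrom ν.src ν.edges) := by
      rw [star_mul]
      simp only [mul_assoc]
    rw [hT, S_mul_sFrom μ.ok, S_mul_sFrom ν.ok]
    split
    · next h1 =>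
      split
      · next h2 =>
        exact mem_FEk_of_word F ⟨rfl, by rw [h1]; exact μ.ok⟩
          ⟨rfl, by rw [h2]; exact ν.ok⟩
          (by rw [List.length_cons, hμ']) (by rw [List.length_cons, hν'])
      · rw [star_zero, mul_zero]; exact zero_mem _
    · rw [zero_mul]; exact zero_mem _
  | zero => rw [shift_zero]; exact zero_mem _
  | add x y _ _ h1 h2 => rw [shift_add]; exact add_mem h1 h2
  | smul c x _ h1 => rw [shift_smul]; exact Submodule.smul_mem _ _ h1

theorem shift_iter_mem_FEk {x : A} {n : ℕ} (hx : x ∈ F.FEk n) (m : ℕ) :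
    F.shift^[m] x ∈ F.FEk (n + m) := by
  induction m with
  | zero => exact hx
  | succ m ih =>
    rw [Function.iterate_succ_apply', ← Nat.add_assoc]
    exact shift_mem_FEk ih

end CHS
namespace CHS
open FinDirGraph

variable {G : FinDirGraph} {A : Type} [CStarAlgebra A] [PartialOrder A] [StarOrderedRing A]
variable {F : CKFamily G A}

section ukProd

variable {q : A}

@[simp] theorem ukProd_zero : F.ukProd q 0 = 1 := rfl
theorem ukProd_succ (m : ℕ) : F.ukProd q (m + 1) = F.ukProd q m * F.shift^[m] q := rfl

theorem CommP.ukProd (hqc : CommP F q) (m : ℕ) : CommP F (F.ukProd q m) := by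
  induction m with
  | zero => exact CommP.one
  | succ m ih => exact ih.mul (hqc.shift_iter m)

theorem ukProd_succ' (hqc : CommP F q) (hGA : IsGraphCStarAlgebra G A F)
    (hns : G.NoSinks) (m : ℕ) :
    F.ukProd q (m + 1) = q * F.shift (F.ukProd q m) := by
  induction m with
  | zero =>
    rw [ukProd_succ, ukProd_zero, one_mul, Function.iterate_zero_apply,
      shift_one hGA hns, mul_one]
  | succ m ih =>
    conv_lhs => rw [ukProd_succ, ih, Function.iterate_succ_apply',
      mul_assoc, shift_mul_shift _ (hqc.shift_iter m), ← ukProd_succ]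

theorem ukProd_star_mul_self (hqc : CommP F q) (hq1 : star q * q = 1)
    (hGA : IsGraphCStarAlgebra G A F)
    (hns : G.NoSinks) (m : ℕ) : star (F.ukProd q m) * F.ukProd q m = 1 := by
  induction m with
  | zero => rw [ukProd_zero, star_one, one_mul]
  | succ m ih =>
    rw [ukProd_succ, star_mul, mul_assoc, ← mul_assoc (star (F.ukProd q m)),
      ih, one_mul, ← shift_iter_star, shift_iter_mul _ hqc m, hq1,
      shift_iter_one hGA hns]

theorem ukProd_mul_star_self (hqc : CommP F q) (hq2 : q * star q = 1)
    (hGA : IsGraphCStarAlgebra G A F)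
    (hns : G.NoSinks) (m : ℕ) : F.ukProd q m * star (F.ukProd q m) = 1 := by
  induction m with
  | zero => rw [ukProd_zero, star_one, one_mul]
  | succ m ih =>
    rw [ukProd_succ, star_mul, mul_assoc, ← mul_assoc (F.shift^[m] q),
      ← shift_iter_star, shift_iter_mul _ hqc.star m, hq2, shift_iter_one hGA hns,
      one_mul, ih]

theorem ukProd_add (hqc : CommP F q) (hGA : IsGraphCStarAlgebra G A F)
    (hns : G.NoSinks) (a b : ℕ) :
    F.ukProd q (a + b) = F.ukProd q a * F.shift^[a] (F.ukProd q b) := by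
  induction b with
  | zero => rw [Nat.add_zero, ukProd_zero, shift_iter_one hGA hns, mul_one]
  | succ b ih =>
    rw [← Nat.add_assoc, ukProd_succ, ih, ukProd_succ, mul_assoc,
      Function.iterate_add_apply, shift_iter_mul _ (hqc.shift_iter b) a]

theorem ukProd_mem_FEk {j : ℕ} (hqF : q ∈ F.FEk j)
    (hGA : IsGraphCStarAlgebra G A F) (hns : G.NoSinks) :
    ∀ m, 1 ≤ m → F.ukProd q m ∈ F.FEk (m + j - 1) := by
  intro m hm
  induction m with
  | zero => omega
  | succ m ih =>
    rcases Nat.eq_zero_or_pos m with rfl | hmpos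
    · rw [ukProd_succ, ukProd_zero, one_mul, Function.iterate_zero_apply]
      have : 0 + 1 + j - 1 = j := by omega
      rw [this]
      exact hqF
    · have h1 : F.ukProd q m ∈ F.FEk (m + j - 1) := ih hmpos
      have h2 : F.shift^[m] q ∈ F.FEk (j + m) := shift_iter_mem_FEk hqF m
      have h3 : F.ukProd q m ∈ F.FEk (j + m) :=
        FEk_mono hGA hns (by omega) h1
      have h4 : F.ukProd q m * F.shift^[m] q ∈ F.FEk (j + m) :=
        mul_mem_FEk F h3 h2
      have : j + m = m + 1 + j - 1 := by omega
      rw [ukProd_succ, ← this]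
      exact h4

theorem ukProd_mul_S (hqc : CommP F q) (hGA : IsGraphCStarAlgebra G A F)
    (hns : G.NoSinks) (m : ℕ) (e : G.E) :
    F.ukProd q (m + 1) * F.S e = q * F.S e * F.ukProd q m := by
  rw [ukProd_succ' hqc hGA hns, mul_assoc, shift_mul_S (hqc.ukProd m) e, ← mul_assoc]

end ukProd

section lam

variable {u : A}

theorem lam_sFrom (lam : A →⋆ₐ[ℂ] A) (hlam : F.IsLambdaU u lam) (huc : CommP F u)
    (hGA : IsGraphCStarAlgebra G A F) (hns : G.NoSinks) (l : List G.E) (v : G.V) :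
    lam (F.sFrom v l) = F.ukProd u l.length * F.sFrom v l := by
  induction l generalizing v with
  | nil => rw [sFrom_nil, hlam.2, List.length_nil, ukProd_zero, one_mul]
  | cons e t ih =>
    rw [sFrom_cons, map_mul, hlam.1, ih (G.r e), List.length_cons,
      ← mul_assoc, ← ukProd_mul_S huc hGA hns, mul_assoc]

theorem lam_FEk (lam : A →⋆ₐ[ℂ] A) (hlam : F.IsLambdaU u lam) (huc : CommP F u)
    (hGA : IsGraphCStarAlgebra G A F) (hns : G.NoSinks) {m : ℕ} {x : A}
    (hx : x ∈ F.FEk m) :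
    lam x = F.ukProd u m * x * star (F.ukProd u m) := by
  induction hx using Submodule.span_induction with
  | mem a ha =>
    obtain ⟨μ, ν, hμ, hν, rfl⟩ := ha
    have hμ' : μ.edges.length = m := hμ
    have hν' : ν.edges.length = m := hν
    show lam (F.sFrom μ.src μ.edges * star (F.sFrom ν.src ν.edges)) =
      F.ukProd u m * (F.sFrom μ.src μ.edges * star (F.sFrom ν.src ν.edges)) *
        star (F.ukProd u m)
    rw [map_mul, map_star, lam_sFrom lam hlam huc hGA hns, lam_sFrom lam hlam huc hGA hns,
      hμ', hν', star_mul]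
    simp only [mul_assoc]
  | zero => rw [map_zero, mul_zero, zero_mul]
  | add x y _ _ h1 h2 => rw [map_add, h1, h2, mul_add, add_mul]
  | smul c x _ h1 => rw [map_smul, h1, mul_smul_comm, smul_mul_assoc]

end lam

section universal

variable {u : A}

theorem exists_lam (hGA : IsGraphCStarAlgebra G A F) (hu : F.IsUE u) :
    ∃ lam : A →⋆ₐ[ℂ] A, F.IsLambdaU u lam := by
  have hu1 : star u * u = 1 := (Unitary.mem_iff.mp hu.1).1
  have hu2 : u * star u = 1 := (Unitary.mem_iff.mp hu.1).2
  have hcomm : ∀ v, u * F.P v = F.P v * u := hu.2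
  let F' : CKFamily G A :=
    { P := F.P
      S := fun e => u * F.S e
      proj_idem := F.proj_idem
      proj_sa := F.proj_sa
      orth := F.orth
      ck1 := fun e => by
        rw [star_mul, mul_assoc, ← mul_assoc (star u), hu1, one_mul, F.ck1]
      ck1' := fun e f hef => by
        rw [star_mul, mul_assoc, ← mul_assoc (star u), hu1, one_mul, F.ck1' e f hef]
      ck2 := fun e => by
        have h := star_left_conjugate_le_conjugate (F.ck2 e) (star u)
        rw [star_star] at h
        have h1 : u * (F.S e * star (F.S e)) * star u
            = u * F.S e * star (u * F.S e) := by
          rw [star_mul]; simp only [mul_assoc]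
        have h2 : u * F.P (G.s e) * star u = F.P (G.s e) := by
          rw [hcomm, mul_assoc, hu2, mul_one]
        rw [h1, h2] at h
        exact h
      ck3 := fun v hv => by
        have h1 : ∀ e, (u * F.S e) * star (u * F.S e)
            = u * (F.S e * star (F.S e)) * star u := by
          intro e
          rw [star_mul]; simp only [mul_assoc]
        calc F.P v = u * F.P v * star u := by rw [hcomm, mul_assoc, hu2, mul_one]
          _ = u * (∑ e ∈ Finset.univ.filter (fun e => G.s e = v),
                F.S e * star (F.S e)) * star u := by rw [← F.ck3 v hv]
          _ = ∑ e ∈ Finset.univ.filter (fun e => G.s e = v),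
                (u * F.S e) * star (u * F.S e) := by
            rw [Finset.mul_sum, Finset.sum_mul]
            exact Finset.sum_congr rfl fun e _ => (h1 e).symm }
  obtain ⟨φ, hφ, -⟩ := hGA.universal A F' hGA.sum_one
  exact ⟨φ, hφ.2, hφ.1⟩

theorem hom_fix (hGA : IsGraphCStarAlgebra G A F)
    (ψ : A →⋆ₐ[ℂ] A) (hP : ∀ v, ψ (F.P v) = F.P v)
    (hS : ∀ e, ψ (F.S e) = F.S e) : ∀ x, ψ x = x := by
  obtain ⟨φ, -, huniq⟩ := hGA.universal A F hGA.sum_one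
  have h1 : ψ = φ := huniq ψ ⟨hP, hS⟩
  have h2 : StarAlgHom.id ℂ A = φ := huniq _ ⟨fun v => rfl, fun e => rfl⟩
  intro x
  rw [h1, ← h2]
  rfl

end universal

end CHS
namespace CHS
open FinDirGraph

variable {G : FinDirGraph} {A : Type} [CStarAlgebra A] [PartialOrder A] [StarOrderedRing A]
variable {F : CKFamily G A}

section Xi

variable {u : A} {k : ℕ}

/-- One step of the `Ξ` construction. -/
noncomputable def xiStep (F : CKFamily G A) (u : A) (N : Submodule ℂ A) : Submodule ℂ A :=
  Submodule.span ℂ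
    {a : A | ∃ x ∈ N, ∃ e f : G.E, a = star (u * F.S e) * x * (u * F.S f)}

theorem Xi_zero : F.Xi u k 0 = F.FEk (k - 1) := rfl

theorem Xi_succ (r : ℕ) : F.Xi u k (r + 1) = xiStep F u (F.Xi u k r) := rfl

theorem xiStep_mono {N₁ N₂ : Submodule ℂ A} (h : N₁ ≤ N₂) :
    xiStep F u N₁ ≤ xiStep F u N₂ := by
  apply Submodule.span_mono
  rintro a ⟨x, hx, e, f, rfl⟩
  exact ⟨x, h hx, e, f, rfl⟩

theorem amap_eq (e f : G.E) (x : A) :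
    star (u * F.S e) * x * (u * F.S f) = F.amap u e f x := by
  rw [CKFamily.amap, star_mul]
  simp only [mul_assoc]

theorem amap_mem_FEk (hu : F.IsUE u) (huk : u ∈ F.FEk k) (hk : 1 ≤ k)
    (hGA : IsGraphCStarAlgebra G A F) (hns : G.NoSinks)
    {x : A} (hx : x ∈ F.FEk (k - 1)) (e f : G.E) :
    F.amap u e f x ∈ F.FEk (k - 1) := by
  have hx' : x ∈ F.FEk k := FEk_mono hGA hns (Nat.sub_le k 1) hx
  have hmid : star u * x * u ∈ F.FEk k :=
    mul_mem_FEk F (mul_mem_FEk F (star_mem_FEk F huk) hx') huk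
  have hk' : k - 1 + 1 = k := Nat.succ_pred_eq_of_pos hk
  rw [CKFamily.amap]
  exact compress_mem_FEk (by rw [hk']; exact hmid) e f

theorem Xi_one_le (hu : F.IsUE u) (huk : u ∈ F.FEk k) (hk : 1 ≤ k)
    (hGA : IsGraphCStarAlgebra G A F) (hns : G.NoSinks) :
    F.Xi u k 1 ≤ F.Xi u k 0 := by
  rw [Xi_succ, Xi_zero, xiStep, Submodule.span_le]
  rintro a ⟨x, hx, e, f, rfl⟩
  rw [amap_eq]
  exact amap_mem_FEk hu huk hk hGA hns hx e f

theorem Xi_antitone (hu : F.IsUE u) (huk : u ∈ F.FEk k) (hk : 1 ≤ k)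
    (hGA : IsGraphCStarAlgebra G A F) (hns : G.NoSinks) (r : ℕ) :
    F.Xi u k (r + 1) ≤ F.Xi u k r := by
  induction r with
  | zero => exact Xi_one_le hu huk hk hGA hns
  | succ r ih => exact xiStep_mono ih

theorem Xi_le_zero (hu : F.IsUE u) (huk : u ∈ F.FEk k) (hk : 1 ≤ k)
    (hGA : IsGraphCStarAlgebra G A F) (hns : G.NoSinks) (r : ℕ) :
    F.Xi u k r ≤ F.Xi u k 0 := by
  induction r with
  | zero => exact le_rfl
  | succ r ih => exact le_trans (Xi_antitone hu huk hk hGA hns r) ih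

@[simp] theorem acomp_nil (x : A) : F.acomp u [] x = x := rfl
@[simp] theorem acomp_cons (p : G.E × G.E) (t : List (G.E × G.E)) (x : A) :
    F.acomp u (p :: t) x = F.amap u p.1 p.2 (F.acomp u t x) := rfl

theorem acomp_append (L₁ L₂ : List (G.E × G.E)) (x : A) :
    F.acomp u (L₁ ++ L₂) x = F.acomp u L₁ (F.acomp u L₂ x) := by
  induction L₁ with
  | nil => rfl
  | cons p t ih => rw [List.cons_append, acomp_cons, acomp_cons, ih]

theorem acomp_mem_Xi {x : A} (hx : x ∈ F.FEk (k - 1)) :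
    ∀ L : List (G.E × G.E), F.acomp u L x ∈ F.Xi u k L.length := by
  intro L
  induction L with
  | nil => exact hx
  | cons p t ih =>
    rw [List.length_cons, Xi_succ, acomp_cons]
    exact Submodule.subset_span ⟨F.acomp u t x, ih, p.1, p.2, (amap_eq p.1 p.2 _).symm⟩

theorem amap_D (hu : F.IsUE u) {d : A} (hd : d ∈ F.DEk 0) (e f : G.E) :
    F.amap u e f d ∈ F.DEk 0 := by
  have hu1 : star u * u = 1 := (Unitary.mem_iff.mp hu.1).1
  rw [CKFamily.amap, starU_mul_D_mul_U hu.2 hu1 hd]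
  exact S_star_mul_D_mul_S e f hd

theorem acomp_D (hu : F.IsUE u) {d : A} (hd : d ∈ F.DEk 0) (L : List (G.E × G.E)) :
    F.acomp u L d ∈ F.DEk 0 := by
  induction L with
  | nil => exact hd
  | cons p t ih => exact amap_D hu ih p.1 p.2

theorem ofFn_of_length_eq {α : Type} (l : List α) (n : ℕ) (h : l.length = n) :
    List.ofFn (fun i : Fin n => l.get (Fin.cast h.symm i)) = l := by
  subst h
  exact List.ofFn_get l

theorem FEk_findim (n : ℕ) : FiniteDimensional ℂ ↥(F.FEk n) := by
  classical
  let D := (G.V × (Fin n → G.E)) × (G.V × (Fin n → G.E))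
  let f : D → A := fun p =>
    (F.P p.1.1 * F.sFrom p.1.1 (List.ofFn p.1.2)) *
      star (F.P p.2.1 * F.sFrom p.2.1 (List.ofFn p.2.2))
  have hsub : {a : A | ∃ μ ν : G.Path, μ.len = n ∧ ν.len = n ∧
      a = F.sPath μ * star (F.sPath ν)} ⊆ Set.range f := by
    rintro a ⟨μ, ν, hμ, hν, rfl⟩
    refine ⟨⟨⟨μ.src, fun i => μ.edges.get (Fin.cast (Eq.symm hμ) i)⟩,
            ⟨ν.src, fun i => ν.edges.get (Fin.cast (Eq.symm hν) i)⟩⟩, ?_⟩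
    show (F.P μ.src * F.sFrom μ.src (List.ofFn _)) *
      star (F.P ν.src * F.sFrom ν.src (List.ofFn _)) = _
    rw [ofFn_of_length_eq μ.edges n hμ, ofFn_of_length_eq ν.edges n hν,
      P_mul_sFrom F _ _ μ.ok, P_mul_sFrom F _ _ ν.ok]
    rfl
  have hfin : FiniteDimensional ℂ ↥(Submodule.span ℂ (Set.range f)) :=
    FiniteDimensional.span_of_finite ℂ (Set.finite_range f)
  exact Submodule.finiteDimensional_of_le (Submodule.span_mono hsub)

end Xi

end CHS
namespace CHS
open FinDirGraph

variable {G : FinDirGraph} {A : Type} [CStarAlgebra A] [PartialOrder A] [StarOrderedRing A]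
variable {F : CKFamily G A}

section stab

variable {u : A} {k : ℕ}

theorem Xi_exists_stab (hu : F.IsUE u) (huk : u ∈ F.FEk k) (hk : 1 ≤ k)
    (hGA : IsGraphCStarAlgebra G A F) (hns : G.NoSinks) :
    ∃ r, F.Xi u k (r + 1) = F.Xi u k r := by
  by_contra hcon
  push_neg at hcon
  haveI hFD : FiniteDimensional ℂ ↥(F.FEk (k - 1)) := FEk_findim (k - 1)
  haveI h0 : FiniteDimensional ℂ ↥(F.Xi u k 0) := by
    rw [Xi_zero]; exact FEk_findim (k - 1)
  have hfd : ∀ r, FiniteDimensional ℂ ↥(F.Xi u k r) := fun r =>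
    Submodule.finiteDimensional_of_le (Xi_le_zero hu huk hk hGA hns r)
  have hlt : ∀ r, F.Xi u k (r + 1) < F.Xi u k r := fun r =>
    lt_of_le_of_ne (Xi_antitone hu huk hk hGA hns r) (hcon r)
  have hd : ∀ r, Module.finrank ℂ ↥(F.Xi u k (r + 1)) < Module.finrank ℂ ↥(F.Xi u k r) :=
    fun r => by
      haveI := hfd r
      exact Submodule.finrank_lt_finrank_of_lt (hlt r)
  have hsum : ∀ r, Module.finrank ℂ ↥(F.Xi u k r) + r ≤ Module.finrank ℂ ↥(F.Xi u k 0) := by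
    intro r
    induction r with
    | zero => omega
    | succ r ih => have := hd r; omega
  have := hsum (Module.finrank ℂ ↥(F.Xi u k 0) + 1)
  omega

theorem Xi_stab_ge {r : ℕ} (hstab : F.Xi u k (r + 1) = F.Xi u k r) :
    ∀ m, r ≤ m → F.Xi u k m = F.Xi u k r := by
  intro m hm
  induction hm with
  | refl => rfl
  | @step m hm ih =>
    rw [Xi_succ, ih, ← Xi_succ, hstab]

end stab

section ACC

variable {u : A}

/-- Key computation: compressions of `Ad(u_m)`-conjugates are `acomp`'s. -/
theorem ACC (huc : CommP F u) (hGA : IsGraphCStarAlgebra G A F) (hns : G.NoSinks) :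
    ∀ (lα lβ : List G.E), lα.length = lβ.length → ∀ (v w : G.V) (y : A),
    star (F.sFrom v lα) * (star (F.ukProd u lα.length) * y * F.ukProd u lα.length) *
        F.sFrom w lβ
      = F.P (G.rangeFrom v lα) * F.acomp u ((lα.zip lβ).reverse) y *
        F.P (G.rangeFrom w lβ)
  | [], [], _, v, w, y => by
    rw [List.length_nil, ukProd_zero, star_one, one_mul, mul_one, sFrom_nil,
      sFrom_nil, F.proj_sa, List.zip_nil_right, List.reverse_nil, acomp_nil,
      rangeFrom_nil, rangeFrom_nil]
  | [], b :: tβ, hlen, _, _, _ => by simp at hlen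
  | a :: tα, [], hlen, _, _, _ => by simp at hlen
  | a :: tα, b :: tβ, hlen, v, w, y => by
    have hlen' : tα.length = tβ.length := by simpa using hlen
    have hUS : ∀ z : A, F.ukProd u (tα.length + 1) * (F.S b * z)
        = u * (F.S b * (F.ukProd u tα.length * z)) := by
      intro z
      rw [← mul_assoc, ukProd_mul_S huc hGA hns tα.length b]
      simp only [mul_assoc]
    have hSU : ∀ z : A, star (F.S a) * (star (F.ukProd u (tα.length + 1)) * z)
        = star (F.ukProd u tα.length) * (star (F.S a) * (star u * z)) := by
      intro z
      have h := congrArg Star.star (ukProd_mul_S huc hGA hns tα.length a)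
      rw [star_mul, star_mul, star_mul] at h
      rw [← mul_assoc, h]
      simp only [mul_assoc]
    have hzip : ((a :: tα).zip (b :: tβ)).reverse = (tα.zip tβ).reverse ++ [(a, b)] := by
      rw [List.zip_cons_cons, List.reverse_cons]
    rw [hzip, acomp_append]
    have hsingle : F.acomp u [(a, b)] y = F.amap u a b y := rfl
    rw [hsingle]
    have hIH := ACC huc hGA hns tα tβ hlen' (G.r a) (G.r b) (F.amap u a b y)
    rw [show G.rangeFrom v (a :: tα) = G.rangeFrom (G.r a) tα from rfl,
      show G.rangeFrom w (b :: tβ) = G.rangeFrom (G.r b) tβ from rfl, ← hIH]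
    simp only [sFrom_cons, List.length_cons, CKFamily.amap, star_mul, mul_assoc]
    rw [hUS, hSU]

end ACC

section Wsum

variable (F)

/-- `W v g = P v * S_{ofFn g}`; equals `S_μ` if `(v, g)` is a path, and `0` otherwise. -/
def W (n : ℕ) (p : G.V × (Fin n → G.E)) : A :=
  F.P p.1 * F.sFrom p.1 (List.ofFn p.2)

variable {F}

theorem W_dichotomy (n : ℕ) (p : G.V × (Fin n → G.E)) :
    W F n p = 0 ∨ (G.IsPathFrom p.1 (List.ofFn p.2) ∧
      W F n p = F.sFrom p.1 (List.ofFn p.2)) := by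
  by_cases h : G.IsPathFrom p.1 (List.ofFn p.2)
  · exact Or.inr ⟨h, P_mul_sFrom F _ _ h⟩
  · exact Or.inl (P_mul_sFrom_zero F _ _ h)

theorem unitSum (hGA : IsGraphCStarAlgebra G A F) (hns : G.NoSinks) :
    ∀ (n : ℕ) (v : G.V),
      ∑ g : Fin n → G.E, W F n (v, g) * star (W F n (v, g)) = F.P v := by
  intro n
  induction n with
  | zero =>
    intro v
    rw [Fintype.sum_eq_single (fun i : Fin 0 => i.elim0)
      (fun g hg => absurd (funext fun i => i.elim0) hg)]
    show (F.P v * F.sFrom v (List.ofFn _)) * star (F.P v * F.sFrom v (List.ofFn _)) = _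
    rw [List.ofFn_zero, sFrom_nil, F.proj_idem, F.proj_sa, F.proj_idem]
  | succ n ih =>
    intro v
    have hsum : (∑ g : Fin (n + 1) → G.E, W F (n + 1) (v, g) * star (W F (n + 1) (v, g)))
        = ∑ e : G.E, ∑ g : Fin n → G.E,
            W F (n + 1) (v, Fin.cons e g) * star (W F (n + 1) (v, Fin.cons e g)) := by
      rw [← Fintype.sum_prod_type']
      exact (Fintype.sum_equiv (Fin.consEquiv fun _ => G.E)
        (fun p => W F (n + 1) (v, Fin.cons p.1 p.2) *
          star (W F (n + 1) (v, Fin.cons p.1 p.2)))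
        (fun g => W F (n + 1) (v, g) * star (W F (n + 1) (v, g)))
        (fun p => rfl)).symm
    have hterm : ∀ (e : G.E) (g : Fin n → G.E),
        W F (n + 1) (v, Fin.cons e g) * star (W F (n + 1) (v, Fin.cons e g))
          = F.P v * (F.S e * ((W F n (G.r e, g) * star (W F n (G.r e, g))) *
              (star (F.S e) * F.P v))) := by
      intro e g
      have hofn : List.ofFn (Fin.cons e g : Fin (n + 1) → G.E) = e :: List.ofFn g := by
        rw [List.ofFn_succ]
        simp
      have hW : W F (n + 1) (v, Fin.cons e g) = F.P v * (F.S e * W F n (G.r e, g)) := by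
        show F.P v * F.sFrom v (List.ofFn (Fin.cons e g)) =
          F.P v * (F.S e * (F.P (G.r e) * F.sFrom (G.r e) (List.ofFn g)))
        rw [hofn, sFrom_cons, ← mul_assoc (F.S e), S_mul_rP]
      rw [hW, star_mul, star_mul, F.proj_sa]
      simp only [mul_assoc]
    rw [hsum]
    have step1 : ∀ e : G.E, (∑ g : Fin n → G.E,
        W F (n + 1) (v, Fin.cons e g) * star (W F (n + 1) (v, Fin.cons e g)))
        = F.P v * (F.S e * (F.P (G.r e) * (star (F.S e) * F.P v))) := by
      intro e
      rw [Finset.sum_congr rfl (fun g _ => hterm e g), ← Finset.mul_sum,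
        ← Finset.mul_sum, ← Finset.sum_mul, ih (G.r e)]
    rw [Finset.sum_congr rfl (fun e _ => step1 e)]
    have hpe : ∀ e : G.E, F.P v * (F.S e * (F.P (G.r e) * (star (F.S e) * F.P v)))
        = F.P v * (F.S e * star (F.S e) * F.P v) := by
      intro e
      rw [← mul_assoc (F.S e), S_mul_rP, ← mul_assoc (F.S e)]
    rw [Finset.sum_congr rfl (fun e _ => hpe e), ← Finset.mul_sum, ← Finset.sum_mul,
      ← one_eq_sum hGA hns, one_mul, F.proj_idem]

theorem one_eq_sum_W (hGA : IsGraphCStarAlgebra G A F) (hns : G.NoSinks) (n : ℕ) :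
    (1 : A) = ∑ p : G.V × (Fin n → G.E), W F n p * star (W F n p) := by
  rw [Fintype.sum_prod_type]
  calc (1 : A) = ∑ v : G.V, F.P v := hGA.sum_one.symm
    _ = ∑ v : G.V, ∑ g : Fin n → G.E, W F n (v, g) * star (W F n (v, g)) :=
      Finset.sum_congr rfl fun v _ => (unitSum hGA hns n v).symm

end Wsum

end CHS
namespace CHS
open FinDirGraph

variable {G : FinDirGraph} {A : Type} [CStarAlgebra A] [PartialOrder A] [StarOrderedRing A]
variable {F : CKFamily G A}

section Wshift

theorem shift_iter_mul_W {y : A} (hy : CommP F y) (n : ℕ) (p : G.V × (Fin n → G.E)) :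
    F.shift^[n] y * W F n p = W F n p * y := by
  show F.shift^[n] y * (F.P p.1 * F.sFrom p.1 (List.ofFn p.2))
    = (F.P p.1 * F.sFrom p.1 (List.ofFn p.2)) * y
  rw [← mul_assoc, (hy.shift_iter n) p.1, mul_assoc,
    shift_iter_mul_sFrom hy (List.length_ofFn (f := p.2)) p.1, ← mul_assoc]

theorem star_W_mul_shift_iter {y : A} (hy : CommP F y) (n : ℕ)
    (p : G.V × (Fin n → G.E)) :
    star (W F n p) * F.shift^[n] y = y * star (W F n p) := by
  have h := congrArg Star.star (shift_iter_mul_W hy.star n p)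
  rw [star_mul, star_mul, star_star, ← shift_iter_star, star_star] at h
  exact h

end Wshift

section Yspan

variable {M r : ℕ}

/-- Auxiliary submodules used in the proof of (1) ⇒ (4). -/
noncomputable def Yspan (F : CKFamily G A) (M r : ℕ) : Submodule ℂ A :=
  Submodule.span ℂ {a : A | ∃ (lμ lν : List G.E) (y : A), lμ.length = r ∧
    lν.length = r ∧ y ∈ F.FEk M ∧ a = star (listProd F lμ) * y * listProd F lν}

theorem FEk_le_Yspan_zero : F.FEk M ≤ Yspan F M 0 := by
  intro y hy
  exact Submodule.subset_span
    ⟨[], [], y, rfl, rfl, hy, by rw [listProd_nil, star_one, one_mul, mul_one]⟩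

theorem Yspan_step (e f : G.E) {x : A} (hx : x ∈ Yspan F M r) :
    star (F.S e) * x * F.S f ∈ Yspan F M (r + 1) := by
  induction hx using Submodule.span_induction with
  | mem a ha =>
    obtain ⟨lμ, lν, y, hlμ, hlν, hy, rfl⟩ := ha
    apply Submodule.subset_span
    refine ⟨lμ ++ [e], lν ++ [f], y, by simp [hlμ], by simp [hlν], hy, ?_⟩
    rw [listProd_append, listProd_append, listProd_cons, listProd_nil, mul_one,
      listProd_cons, listProd_nil, mul_one, star_mul]
    simp only [mul_assoc]
  | zero => rw [mul_zero, zero_mul]; exact zero_mem _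
  | add x y _ _ h1 h2 => rw [mul_add, add_mul]; exact add_mem h1 h2
  | smul c x _ h1 =>
    rw [mul_smul_comm, smul_mul_assoc]; exact Submodule.smul_mem _ _ h1

theorem Yspan_le_DEk (hGA : IsGraphCStarAlgebra G A F) (hns : G.NoSinks) :
    Yspan F M M ≤ F.DEk 0 := by
  rw [Yspan, Submodule.span_le]
  rintro a ⟨lμ, lν, y, hlμ, hlν, hy, rfl⟩
  exact compressL hGA hns M M le_rfl y hy lμ lν hlμ hlν

end Yspan

section bstable

variable {u : A} {k : ℕ}

theorem compress_bconj (hu : F.IsUE u) (huk : u ∈ F.FEk k) (hk : 1 ≤ k)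
    (hGA : IsGraphCStarAlgebra G A F) (hns : G.NoSinks)
    {l : ℕ} (h3 : ∀ L : List (G.E × G.E), L.length = l →
      ∀ x ∈ F.FEk (k - 1), F.acomp u L x ∈ F.DEk 0)
    {m : ℕ} (hml : l ≤ m) (v w : G.V) (lα lβ : List G.E)
    (hlα : lα.length = m + 1) (hlβ : lβ.length = m + 1) :
    star (F.sFrom v lα) * (star (F.ukProd u (m + 1)) * star u * F.ukProd u (m + 1)) *
      F.sFrom w lβ ∈ F.DEk 0 := by
  have huc : CommP F u := hu.2
  have hu1 : star u * u = 1 := (Unitary.mem_iff.mp hu.1).1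
  have hACC := ACC huc hGA hns lα lβ (by rw [hlα, hlβ]) v w (star u)
  rw [hlα] at hACC
  rw [hACC]
  refine P_mul_D_mul_P _ _ ?_
  set L := (lα.zip lβ).reverse with hL
  have hLlen : L.length = m + 1 := by
    rw [hL, List.length_reverse, List.length_zip, hlα, hlβ, min_self]
  have hne : L ≠ [] := by
    intro h
    rw [h] at hLlen
    simp at hLlen
  rw [← List.dropLast_append_getLast hne, acomp_append]
  have hy' : F.acomp u [L.getLast hne] (star u) ∈ F.FEk (k - 1) := by
    show F.amap u (L.getLast hne).1 (L.getLast hne).2 (F.acomp u [] (star u)) ∈ _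
    rw [acomp_nil, CKFamily.amap]
    have hsu3 : star u * star u * u = star u := by rw [mul_assoc, hu1, mul_one]
    rw [hsu3]
    have hsu : star u ∈ F.FEk k := star_mem_FEk F huk
    have hkk : k - 1 + 1 = k := by omega
    exact compress_mem_FEk (by rw [hkk]; exact hsu) _ _
  have hdrop : L.dropLast.length = m := by
    rw [List.length_dropLast, hLlen]
    omega
  rw [show L.dropLast = L.dropLast.take (m - l) ++ L.dropLast.drop (m - l) from
    (List.take_append_drop _ _).symm, acomp_append]
  have hdl : (L.dropLast.drop (m - l)).length = l := by
    rw [List.length_drop, hdrop]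
    omega
  exact acomp_D hu (h3 _ hdl _ hy') _

theorem bconj_stable (hu : F.IsUE u)
    (hGA : IsGraphCStarAlgebra G A F) (hns : G.NoSinks) (n : ℕ)
    (hcomp : ∀ p q : G.V × (Fin n → G.E),
      star (W F n p) * (star (F.ukProd u n) * star u * F.ukProd u n) * W F n q
        ∈ F.DEk 0) :
    star (F.ukProd u (n + 1)) * star u * F.ukProd u (n + 1)
      = star (F.ukProd u n) * star u * F.ukProd u n := by
  have huc : CommP F u := hu.2
  have hu1 : star u * u = 1 := (Unitary.mem_iff.mp hu.1).1
  have hterm : ∀ d : A, d ∈ F.DEk 0 → ∀ p q : G.V × (Fin n → G.E),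
      star (F.shift^[n] u) * (W F n p * (d * star (W F n q)) * F.shift^[n] u)
        = W F n p * (d * star (W F n q)) := by
    intro d hd p q
    have h1 : star (F.shift^[n] u) * W F n p = W F n p * star u := by
      rw [← shift_iter_star]
      exact shift_iter_mul_W huc.star n p
    have h2 : star (W F n q) * F.shift^[n] u = u * star (W F n q) :=
      star_W_mul_shift_iter huc n q
    have h3 : star u * d * u = d := starU_mul_D_mul_U hu.2 hu1 hd
    calc star (F.shift^[n] u) * (W F n p * (d * star (W F n q)) * F.shift^[n] u)
        = (star (F.shift^[n] u) * W F n p) * (d * (star (W F n q) * F.shift^[n] u)) := by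
          simp only [mul_assoc]
      _ = (W F n p * star u) * (d * (u * star (W F n q))) := by rw [h1, h2]
      _ = W F n p * ((star u * d * u) * star (W F n q)) := by simp only [mul_assoc]
      _ = W F n p * (d * star (W F n q)) := by rw [h3]
  have hrec : star (F.ukProd u n) * star u * F.ukProd u n
      = ∑ p : G.V × (Fin n → G.E), ∑ q : G.V × (Fin n → G.E),
          W F n p * ((star (W F n p) * (star (F.ukProd u n) * star u * F.ukProd u n) *
            W F n q) * star (W F n q)) := by
    conv_lhs => rw [show star (F.ukProd u n) * star u * F.ukProd u n
      = 1 * (star (F.ukProd u n) * star u * F.ukProd u n) * 1 from by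
        rw [one_mul, mul_one]]
    rw [one_eq_sum_W hGA hns n, Finset.sum_mul, Finset.sum_mul]
    refine Finset.sum_congr rfl fun p _ => ?_
    rw [Finset.mul_sum]
    refine Finset.sum_congr rfl fun q _ => ?_
    simp only [mul_assoc]
  have hL : star (F.ukProd u (n + 1)) * star u * F.ukProd u (n + 1)
      = star (F.shift^[n] u) *
          ((star (F.ukProd u n) * star u * F.ukProd u n) * F.shift^[n] u) := by
    rw [ukProd_succ, star_mul]
    simp only [mul_assoc]
  rw [hL]
  conv_lhs => rw [hrec]
  conv_rhs => rw [hrec]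
  rw [Finset.sum_mul, Finset.mul_sum]
  refine Finset.sum_congr rfl fun p _ => ?_
  rw [Finset.sum_mul, Finset.mul_sum]
  refine Finset.sum_congr rfl fun q _ => ?_
  exact hterm _ (hcomp p q) p q

end bstable

end CHS

open CHS

open FinDirGraph in
/-- Theorem 5.1 (main). -/
theorem stmt_14 (G : FinDirGraph) (hns : G.NoSinks)
    (A : Type) [CStarAlgebra A] [PartialOrder A] [StarOrderedRing A]
    (F : CKFamily G A) (hGA : IsGraphCStarAlgebra G A F)
    (k : ℕ) (hk : 1 ≤ k) (u : A) (hu : F.IsUE u) (huk : u ∈ F.FEk k) :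
    List.TFAE [
      -- (1) λ_u is invertible with localized inverse
      ∃ (lam lamw : A →⋆ₐ[ℂ] A) (w : A) (l : ℕ), F.IsLambdaU u lam ∧
        F.IsUE w ∧ 1 ≤ l ∧ w ∈ F.FEk l ∧ F.IsLambdaU w lamw ∧
        (∀ x, lam (lamw x) = x) ∧ (∀ x, lamw (lam x) = x),
      -- (2) the sequence Ad(u_m*)(u*) eventually stabilizes
      ∃ N : ℕ, 1 ≤ N ∧ ∀ m : ℕ, N ≤ m →
        star (F.ukProd u m) * star u * F.ukProd u m
          = star (F.ukProd u N) * star u * F.ukProd u N,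
      -- (3) the ring A_u is nilpotent
      ∃ l : ℕ, 1 ≤ l ∧ ∀ L : List (G.E × G.E), L.length = l →
        ∀ x ∈ F.FEk (k - 1), F.acomp u L x ∈ F.DEk 0,
      -- (4) Ξ_u ⊆ D_E^0
      (⨅ r : ℕ, F.Xi u k r) ≤ F.DEk 0 ] := by
  have huc : CommP F u := hu.2
  have hu1 : star u * u = 1 := (Unitary.mem_iff.mp hu.1).1
  have hu2 : u * star u = 1 := (Unitary.mem_iff.mp hu.1).2
  tfae_have 1 → 4 := by
    rintro ⟨lam, lamw, w, l, hlamu, huew, hl1, hwl, hlamw, hlw, hwli⟩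
    have hwc : CommP F w := huew.2
    set M := k + l - 2 with hM
    have hwk1 : F.ukProd w (k - 1) ∈ F.FEk M := by
      rcases Nat.eq_zero_or_pos (k - 1) with h0 | hpos
      · rw [h0, ukProd_zero]
        exact FEk_mono hGA hns (Nat.zero_le M) (one_mem_FEk_zero hGA)
      · have h := ukProd_mem_FEk hwl hGA hns (k - 1) hpos
        have heq : k - 1 + l - 1 = M := by omega
        rwa [heq] at h
    have hclaim : ∀ (r : ℕ) (x : A), x ∈ F.Xi u k r → lamw x ∈ Yspan F M r := by
      intro r
      induction r with
      | zero =>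
        intro x hx
        rw [Xi_zero] at hx
        rw [lam_FEk lamw hlamw hwc hGA hns hx]
        apply FEk_le_Yspan_zero
        have hx' : x ∈ F.FEk M := FEk_mono hGA hns (by omega) hx
        exact mul_mem_FEk F (mul_mem_FEk F hwk1 hx') (star_mem_FEk F hwk1)
      | succ r ih =>
        intro x hx
        rw [Xi_succ, xiStep] at hx
        induction hx using Submodule.span_induction with
        | mem a ha =>
          obtain ⟨x', hx', e, f, rfl⟩ := ha
          have hue : lamw (u * F.S e) = F.S e := by rw [← hlamu.1 e, hwli]
          have huf : lamw (u * F.S f) = F.S f := by rw [← hlamu.1 f, hwli]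
          rw [map_mul, map_mul, map_star, hue, huf]
          exact Yspan_step e f (ih x' hx')
        | zero => rw [map_zero]; exact zero_mem _
        | add x y _ _ h1 h2 => rw [map_add]; exact add_mem h1 h2
        | smul c x _ h1 => rw [map_smul]; exact Submodule.smul_mem _ _ h1
    intro x hx
    have hxM : x ∈ F.Xi u k M := (Submodule.mem_iInf (fun r => F.Xi u k r)).mp hx M
    have hd : lamw x ∈ F.DEk 0 := Yspan_le_DEk hGA hns (hclaim M x hxM)
    have hfix : lam (lamw x) = lamw x := hom_fix_D lam hlamu.2 hd
    rw [← hlw x, hfix]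
    exact hd
  tfae_have 4 → 3 := by
    rintro h4
    obtain ⟨r, hstab⟩ := Xi_exists_stab hu huk hk hGA hns
    have hmono : ∀ s t : ℕ, s ≤ t → F.Xi u k t ≤ F.Xi u k s := by
      intro s t h
      induction h with
      | refl => exact le_rfl
      | step _ ih => exact le_trans (Xi_antitone hu huk hk hGA hns _) ih
    have hXir : F.Xi u k r ≤ F.DEk 0 := by
      refine le_trans (le_iInf fun s => ?_) h4
      rcases le_total s r with hsr | hrs
      · exact hmono s r hsr
      · rw [Xi_stab_ge hstab s hrs]
    refine ⟨max r 1, le_max_right r 1, ?_⟩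
    intro L hL x hx
    have hmem : F.acomp u L x ∈ F.Xi u k (max r 1) := by
      rw [← hL]; exact acomp_mem_Xi hx L
    rw [Xi_stab_ge hstab _ (le_max_left r 1)] at hmem
    exact hXir hmem
  tfae_have 3 → 2 := by
    rintro ⟨l, hl1, h3⟩
    have hcomp : ∀ m, l ≤ m → ∀ p q : G.V × (Fin (m + 1) → G.E),
        star (W F (m + 1) p) *
          (star (F.ukProd u (m + 1)) * star u * F.ukProd u (m + 1)) * W F (m + 1) q
          ∈ F.DEk 0 := by
      intro m hm p q
      rcases W_dichotomy (F := F) (m + 1) p with h0 | ⟨hp, hWp⟩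
      · rw [h0, star_zero, zero_mul, zero_mul]; exact zero_mem _
      rcases W_dichotomy (F := F) (m + 1) q with h0 | ⟨hq, hWq⟩
      · rw [h0, mul_zero]; exact zero_mem _
      rw [hWp, hWq]
      exact compress_bconj hu huk hk hGA hns h3 hm p.1 q.1 _ _
        (List.length_ofFn (f := p.2)) (List.length_ofFn (f := q.2))
    have key : ∀ m, l ≤ m →
        star (F.ukProd u (m + 2)) * star u * F.ukProd u (m + 2)
          = star (F.ukProd u (m + 1)) * star u * F.ukProd u (m + 1) := by
      intro m hm
      exact bconj_stable hu hGA hns (m + 1) (hcomp m hm)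
    refine ⟨l + 1, by omega, ?_⟩
    intro m hm
    induction m, hm using Nat.le_induction with
    | base => rfl
    | succ m hm ih =>
      have hsucc := key (m - 1) (by omega)
      have e1 : m - 1 + 2 = m + 1 := by omega
      have e2 : m - 1 + 1 = m := by omega
      rw [e1, e2] at hsucc
      exact hsucc.trans ih
  tfae_have 2 → 1 := by
    rintro ⟨N, hN1, h2⟩
    set w := star (F.ukProd u N) * star u * F.ukProd u N with hw
    have hwc : CommP F w := ((huc.ukProd N).star.mul huc.star).mul (huc.ukProd N)
    have hukN_unit : F.ukProd u N ∈ unitary A := Unitary.mem_iff.mpr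
      ⟨ukProd_star_mul_self huc hu1 hGA hns N, ukProd_mul_star_self huc hu2 hGA hns N⟩
    have hw_unit : w ∈ unitary A :=
      mul_mem (mul_mem (Unitary.star_mem hukN_unit) (Unitary.star_mem hu.1)) hukN_unit
    have huew : F.IsUE w := ⟨hw_unit, hwc⟩
    set Mw := N + k - 1 with hMw
    have hMw1 : 1 ≤ Mw := by omega
    have hwF : w ∈ F.FEk Mw := by
      have h1 : F.ukProd u N ∈ F.FEk Mw := by
        have := ukProd_mem_FEk huk hGA hns N hN1
        have heq : N + k - 1 = Mw := rfl
        rwa [heq] at this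
      have h2' : star u ∈ F.FEk Mw :=
        FEk_mono hGA hns (by omega) (star_mem_FEk F huk)
      exact mul_mem_FEk F (mul_mem_FEk F (star_mem_FEk F h1) h2') h1
    obtain ⟨lam, hlam⟩ := exists_lam hGA hu
    obtain ⟨lamw, hlamw⟩ := exists_lam hGA huew
    have hlam_w_val : lam w = star u := by
      have h := lam_FEk lam hlam huc hGA hns hwF
      have hconst := h2 Mw (by omega)
      rw [h, ← hconst]
      have hmu2 : F.ukProd u Mw * star (F.ukProd u Mw) = 1 :=
        ukProd_mul_star_self huc hu2 hGA hns Mw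
      simp only [mul_assoc]
      rw [hmu2, mul_one, ← mul_assoc, hmu2, one_mul]
    have hid1 : ∀ x, lam (lamw x) = x := by
      apply hom_fix hGA (lam.comp lamw)
      · intro v
        rw [StarAlgHom.comp_apply, hlamw.2, hlam.2]
      · intro e
        rw [StarAlgHom.comp_apply, hlamw.1, map_mul, hlam.1, hlam_w_val,
          ← mul_assoc, hu1, one_mul]
    set z := lamw u * w with hz
    have hlamw_u : lamw u = F.ukProd w k * u * star (F.ukProd w k) :=
      lam_FEk lamw hlamw hwc hGA hns huk
    have hzc : CommP F z := by
      rw [hz, hlamw_u]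
      exact (((hwc.ukProd k).mul huc).mul (hwc.ukProd k).star).mul hwc
    have hz_unit : z ∈ unitary A := by
      refine mul_mem (Unitary.mem_iff.mpr ⟨?_, ?_⟩) hw_unit
      · rw [← map_star, ← map_mul, hu1, map_one]
      · rw [← map_star, ← map_mul, hu2, map_one]
    set Mz := k + Mw - 1 with hMz
    have hzF : z ∈ F.FEk Mz := by
      have h1 : F.ukProd w k ∈ F.FEk Mz := by
        have := ukProd_mem_FEk hwF hGA hns k hk
        have heq : k + Mw - 1 = Mz := rfl
        rwa [heq] at this
      have h2' : u ∈ F.FEk Mz := FEk_mono hGA hns (by omega) huk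
      have h3' : w ∈ F.FEk Mz := FEk_mono hGA hns (by omega) hwF
      rw [hz, hlamw_u]
      exact mul_mem_FEk F
        (mul_mem_FEk F (mul_mem_FEk F h1 h2') (star_mem_FEk F h1)) h3'
    have hz_comp : ∀ e, lamw (lam (F.S e)) = z * F.S e := by
      intro e
      rw [hlam.1, map_mul, hlamw.1, ← mul_assoc, hz]
    have hlamz : lam z = 1 := by
      have he : ∀ e, (lam z * u) * F.S e = u * F.S e := by
        intro e
        have h1 : lam (lamw (lam (F.S e))) = lam (F.S e) := hid1 _
        rw [hz_comp e, map_mul, hlam.1, ← mul_assoc] at h1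
        rw [h1]
      have h0 := eq_of_mul_S hGA hns he
      have h2' := congrArg (fun t => t * star u) h0
      simp only [mul_assoc, hu2, mul_one] at h2'
      exact h2'
    have hz1 : z = (1 : A) := by
      have hcompz : F.IsLambdaU z (lamw.comp lam) :=
        ⟨fun e => by rw [StarAlgHom.comp_apply]; exact hz_comp e,
         fun v => by rw [StarAlgHom.comp_apply, hlam.2, hlamw.2]⟩
      have h2' : (lamw.comp lam) z = F.ukProd z Mz * z * star (F.ukProd z Mz) :=
        lam_FEk _ hcompz hzc hGA hns hzF
      have h3' : (lamw.comp lam) z = 1 := by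
        rw [StarAlgHom.comp_apply, hlamz, map_one]
      have hz_eq : F.ukProd z Mz * z * star (F.ukProd z Mz) = 1 := by
        rw [← h2', h3']
      have hzu1 : star (F.ukProd z Mz) * F.ukProd z Mz = 1 :=
        ukProd_star_mul_self hzc (Unitary.mem_iff.mp hz_unit).1 hGA hns Mz
      calc z = (star (F.ukProd z Mz) * F.ukProd z Mz) * z *
                (star (F.ukProd z Mz) * F.ukProd z Mz) := by
            rw [hzu1, one_mul, mul_one]
        _ = star (F.ukProd z Mz) *
              (F.ukProd z Mz * z * star (F.ukProd z Mz)) * F.ukProd z Mz := by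
            simp only [mul_assoc]
        _ = 1 := by rw [hz_eq, mul_one, hzu1]
    have hid2 : ∀ x, lamw (lam x) = x := by
      apply hom_fix hGA (lamw.comp lam)
      · intro v
        rw [StarAlgHom.comp_apply, hlam.2, hlamw.2]
      · intro e
        rw [StarAlgHom.comp_apply]
        rw [show lamw (lam (F.S e)) = z * F.S e from hz_comp e, hz1, one_mul]
    exact ⟨lam, lamw, w, Mw, hlam, huew, hMw1, hwF, hlamw, hid1, hid2⟩
  tfae_finish
end
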